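/- arXiv:0807.4074 — 8 statements merged into one kernel-verified Lean document; each statement's English description precedes it below -/
import Mathlib

section
/- Let a ≥ 0, t = 2^a and r = ρ(t). Let γ, χ : {0,…,r−1} → {0,…,t−1} be maps with γ injective, and suppose that for all k, l < r with k ≠ l, the Hamming weight |(χ(k) ⊕ χ(l)) ∧ (γ(k) ⊕ γ(l))| is odd. For each k < r define the real t×t matrix A_k by A_k(i,j) = (−1)^{|i ∧ χ(k)|} if i ⊕ j = γ(k), and A_k(i,j) = 0 otherwise (0 ≤ i,j < t). Then A_0,…,A_{r−1} form a square ROD of size [t,t,ρ(t)]: for every x ∈ ℝ^r, (Σ_{k<r} x_k A_k)ᵀ (Σ_{k<r} x_k A_k) = (Σ_{k<r} x_k²)·I_t. -/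
open Matrix

/-- Hamming weight (popcount) of a natural number. -/
def hw (x : ℕ) : ℕ := (Nat.digits 2 x).sum

/-- Hurwitz–Radon number of `2^a`. -/
def rhoExp (a : ℕ) : ℕ := 8 * (a / 4) + 2 ^ (a % 4)

lemma hw_step (x : ℕ) : hw x = x % 2 + hw (x / 2) := by
  rcases Nat.eq_zero_or_pos x with h | h
  · simp [h, hw]
  · unfold hw
    rw [Nat.digits_def' (by norm_num) h, List.sum_cons]

lemma neg_one_mod_two (n : ℕ) : ((-1:ℝ)) ^ (n % 2) = (-1) ^ n := by
  conv_rhs => rw [← Nat.div_add_mod n 2]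
  rw [pow_add, pow_mul]
  simp

lemma neg_one_hw_xor (x y : ℕ) : ((-1:ℝ)) ^ hw (x ^^^ y) = (-1) ^ hw x * (-1) ^ hw y := by
  induction x using Nat.strong_induction_on generalizing y with
  | _ x ih =>
    rcases Nat.eq_zero_or_pos x with h | h
    · simp [h, hw]
    · have h2 : x / 2 < x := Nat.div_lt_self h one_lt_two
      rw [hw_step (x ^^^ y), hw_step x, hw_step y, Nat.xor_div_two,
        pow_add, pow_add, pow_add, ih _ h2 (y / 2)]
      have hm : ((-1:ℝ)) ^ ((x ^^^ y) % 2) = (-1) ^ (x % 2) * (-1) ^ (y % 2) := by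
        rw [Nat.xor_mod_two_eq, neg_one_mod_two, neg_one_mod_two, neg_one_mod_two, pow_add]
      rw [hm]; ring

lemma hw_mul_self (x : ℕ) : ((-1:ℝ)) ^ hw x * (-1) ^ hw x = 1 := by
  rw [← neg_one_hw_xor]; simp [hw]

lemma neg_one_hw_and_xor (d c x : ℕ) :
    ((-1:ℝ)) ^ hw ((x ^^^ d) &&& c) = (-1) ^ hw (x &&& c) * (-1) ^ hw (d &&& c) := by
  rw [Nat.and_xor_distrib_right, neg_one_hw_xor]

lemma xor_shift (u v w z : ℕ) : (u ^^^ v) ^^^ w = z ↔ v ^^^ w = u ^^^ z := by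
  constructor
  · rintro rfl
    rw [← Nat.xor_assoc, Nat.xor_xor_cancel_left]
  · intro h
    rw [Nat.xor_assoc, h, Nat.xor_xor_cancel_left]

lemma xor_aux (u v w : ℕ) : (u ^^^ w) ^^^ (u ^^^ v) = v ^^^ w := by
  rw [Nat.xor_comm u w, Nat.xor_assoc, Nat.xor_xor_cancel_left, Nat.xor_comm]

/-- if `γ` is injective and the odd-overlap condition holds for `(γ, χ)`,
then the matrices `A_k` with `A_k(i,j) = (−1)^{|i ∧ χ(k)|}` when `i ⊕ j = γ(k)` (and `0`
otherwise) form a square ROD of size `[2^a, 2^a, ρ(2^a)]`. -/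
theorem stmt0 (a : ℕ)
    (γ χ : Fin (rhoExp a) → Fin (2 ^ a))
    (hγ : Function.Injective γ)
    (hodd : ∀ k l : Fin (rhoExp a), k ≠ l →
      Odd (hw ((((χ k).val ^^^ (χ l).val)) &&& (((γ k).val ^^^ (γ l).val)))))
    (A : Fin (rhoExp a) → Matrix (Fin (2 ^ a)) (Fin (2 ^ a)) ℝ)
    (hA : ∀ k i j, A k i j =
      if i.val ^^^ j.val = (γ k).val
      then ((-1 : ℝ)) ^ (hw (i.val &&& (χ k).val))
      else 0) :
    ∀ x : Fin (rhoExp a) → ℝ,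
      (∑ k, x k • A k)ᵀ * (∑ k, x k • A k)
        = (∑ k, x k ^ 2) • (1 : Matrix (Fin (2 ^ a)) (Fin (2 ^ a)) ℝ) := by
  intro x
  ext i j
  simp only [Matrix.mul_apply, Matrix.transpose_apply, Matrix.sum_apply, Matrix.smul_apply,
    smul_eq_mul, Matrix.one_apply, mul_ite, mul_one, mul_zero]
  have step1 : (∑ m, (∑ k, x k * A k m i) * (∑ l, x l * A l m j))
      = ∑ k, ∑ l, x k * x l * (∑ m, A k m i * A l m j) := by
    simp_rw [Finset.sum_mul_sum]
    rw [Finset.sum_comm]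
    refine Finset.sum_congr rfl fun k _ => ?_
    rw [Finset.sum_comm]
    refine Finset.sum_congr rfl fun l _ => ?_
    rw [Finset.mul_sum]
    exact Finset.sum_congr rfl fun m _ => by ring
  have hval : ∀ k l : Fin (rhoExp a), (∑ m, A k m i * A l m j) =
      if i.val ^^^ j.val = (γ k).val ^^^ (γ l).val then
        ((-1:ℝ)) ^ hw (((γ k).val ^^^ i.val) &&& (χ k).val)
          * (-1) ^ hw (((γ k).val ^^^ i.val) &&& (χ l).val)
      else 0 := by
    intro k l
    set m0 : Fin (2 ^ a) := ⟨(γ k).val ^^^ i.val, Nat.xor_lt_two_pow (γ k).isLt i.isLt⟩ with hm0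
    have hsingle : (∑ m, A k m i * A l m j) = A k m0 i * A l m0 j := by
      refine Finset.sum_eq_single m0 (fun b _ hb => ?_) (by simp)
      rw [hA, if_neg, zero_mul]
      intro hbi
      apply hb
      apply Fin.ext
      have : b.val = (γ k).val ^^^ i.val := by
        rw [← hbi, Nat.xor_xor_cancel_right]
      simpa [hm0] using this
    have hAk : A k m0 i = ((-1:ℝ)) ^ hw (((γ k).val ^^^ i.val) &&& (χ k).val) := by
      rw [hA, if_pos]
      exact Nat.xor_xor_cancel_right _ _
    have hcond : (m0.val ^^^ j.val = (γ l).val) ↔ (i.val ^^^ j.val = (γ k).val ^^^ (γ l).val) :=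
      xor_shift (γ k).val i.val j.val (γ l).val
    rw [hsingle, hAk, hA]
    by_cases h : i.val ^^^ j.val = (γ k).val ^^^ (γ l).val
    · rw [if_pos (hcond.mpr h), if_pos h]
    · rw [if_neg (fun hh => h (hcond.mp hh)), if_neg h, mul_zero]
  have hdiag : ∀ k, (∑ m, A k m i * A k m j) = if i = j then 1 else 0 := by
    intro k
    rw [hval]
    by_cases h : i = j
    · subst h
      rw [if_pos (by simp), if_pos rfl, hw_mul_self]
    · rw [if_neg, if_neg h]
      simp only [Nat.xor_self]
      intro hh
      exact h (Fin.ext (Nat.xor_eq_zero_iff.mp hh))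
  have hanti : ∀ k l : Fin (rhoExp a), k ≠ l →
      (∑ m, A l m i * A k m j) = - (∑ m, A k m i * A l m j) := by
    intro k l hkl
    rw [hval, hval]
    have hcc : (i.val ^^^ j.val = (γ l).val ^^^ (γ k).val)
        ↔ (i.val ^^^ j.val = (γ k).val ^^^ (γ l).val) := by
      rw [Nat.xor_comm (γ l).val]
    by_cases h : i.val ^^^ j.val = (γ k).val ^^^ (γ l).val
    · rw [if_pos (hcc.mpr h), if_pos h]
      have e1 : (γ l).val ^^^ i.val = ((γ k).val ^^^ i.val) ^^^ ((γ k).val ^^^ (γ l).val) :=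
        (xor_aux (γ k).val (γ l).val i.val).symm
      rw [e1,
        neg_one_hw_and_xor ((γ k).val ^^^ (γ l).val) (χ l).val ((γ k).val ^^^ i.val),
        neg_one_hw_and_xor ((γ k).val ^^^ (γ l).val) (χ k).val ((γ k).val ^^^ i.val)]
      have hsign : ((-1:ℝ)) ^ hw (((γ k).val ^^^ (γ l).val) &&& (χ l).val)
          * (-1) ^ hw (((γ k).val ^^^ (γ l).val) &&& (χ k).val) = -1 := by
        rw [← neg_one_hw_xor, ← Nat.and_xor_distrib_left, Nat.and_comm,
          Nat.xor_comm (χ l).val (χ k).val]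
        exact Odd.neg_one_pow (hodd k l hkl)
      calc ((-1:ℝ)) ^ hw (((γ k).val ^^^ i.val) &&& (χ l).val)
            * (-1) ^ hw (((γ k).val ^^^ (γ l).val) &&& (χ l).val)
            * ((-1) ^ hw (((γ k).val ^^^ i.val) &&& (χ k).val)
              * (-1) ^ hw (((γ k).val ^^^ (γ l).val) &&& (χ k).val))
          = ((-1:ℝ)) ^ hw (((γ k).val ^^^ i.val) &&& (χ k).val)
            * (-1) ^ hw (((γ k).val ^^^ i.val) &&& (χ l).val)
            * (((-1) ^ hw (((γ k).val ^^^ (γ l).val) &&& (χ l).val))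
              * (-1) ^ hw (((γ k).val ^^^ (γ l).val) &&& (χ k).val)) := by ring
        _ = _ := by rw [hsign]; ring
    · rw [if_neg (fun hh => h (hcc.mp hh)), if_neg h, neg_zero]
  rw [step1]
  have hsplit : (∑ k, ∑ l, x k * x l * (∑ m, A k m i * A l m j))
      = ∑ p ∈ (Finset.univ : Finset (Fin (rhoExp a))).diag,
          x p.1 * x p.2 * (∑ m, A p.1 m i * A p.2 m j)
        + ∑ p ∈ (Finset.univ : Finset (Fin (rhoExp a))).offDiag,
          x p.1 * x p.2 * (∑ m, A p.1 m i * A p.2 m j) := by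
    rw [← Finset.sum_union (Finset.disjoint_diag_offDiag _), Finset.diag_union_offDiag,
      ← Finset.sum_product']
  have hoffzero : ∑ p ∈ (Finset.univ : Finset (Fin (rhoExp a))).offDiag,
      x p.1 * x p.2 * (∑ m, A p.1 m i * A p.2 m j) = 0 := by
    have hswap : ∑ p ∈ (Finset.univ : Finset (Fin (rhoExp a))).offDiag,
          x p.1 * x p.2 * (∑ m, A p.1 m i * A p.2 m j)
        = ∑ p ∈ (Finset.univ : Finset (Fin (rhoExp a))).offDiag,
          x p.2 * x p.1 * (∑ m, A p.2 m i * A p.1 m j) := by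
      refine Finset.sum_equiv (Equiv.prodComm _ _) (fun p => ?_) (fun p hp => rfl)
      simp only [Finset.mem_offDiag, Finset.mem_univ, true_and, Equiv.prodComm_apply,
        Prod.fst_swap, Prod.snd_swap]
      exact ⟨Ne.symm, Ne.symm⟩
    have hneg : ∀ p ∈ (Finset.univ : Finset (Fin (rhoExp a))).offDiag,
        x p.2 * x p.1 * (∑ m, A p.2 m i * A p.1 m j)
          = -(x p.1 * x p.2 * (∑ m, A p.1 m i * A p.2 m j)) := by
      intro p hp
      have hne : p.1 ≠ p.2 := (Finset.mem_offDiag.mp hp).2.2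
      rw [hanti p.1 p.2 hne]
      ring
    rw [Finset.sum_congr rfl hneg, Finset.sum_neg_distrib] at hswap
    linarith
  rw [hsplit, hoffzero, add_zero, Finset.sum_diag]
  simp_rw [hdiag]
  by_cases h : i = j
  · simp [h, sq]
  · simp [h]
end

section
/- Let p, n, k be positive integers and let M be a p×n matrix in k real variables x_0,…,x_{k−1}, encoded by s : {0,…,p−1}×{0,…,n−1} → {−1,0,1} and f : {0,…,p−1}×{0,…,n−1} → {0,…,k−1}, with entries M(i,j) = s(i,j)·x_{f(i,j)} (so M(i,j) = 0 iff s(i,j) = 0). Then the following are equivalent. (1) M is a ROD, i.e., MᵀM = (x_0²+⋯+x_{k−1}²)·I_n identically in x_0,…,x_{k−1}. (2) All of the following hold: (2i) for every column j and every variable index v < k there is exactly one row i with s(i,j) ≠ 0 and f(i,j) = v, and for every row i and every v < k there is at most one column j with s(i,j) ≠ 0 and f(i,j) = v; (2ii) whenever s(i,j) ≠ 0 and s(i,j′) ≠ 0 with j ≠ j′, there exists a row i′ with s(i′,j′) ≠ 0, f(i′,j′) = f(i,j), s(i′,j) ≠ 0 and f(i′,j) = f(i,j′); (2iii) every proper 2×2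 submatrix of M is itself a ROD, i.e., for all rows i ≠ i′ and columns j ≠ j′ such that all four entries M(i,j), M(i,j′), M(i′,j), M(i′,j′) are nonzero and exactly two distinct variables occur among them, the 2×2 matrix M₂ = [[M(i,j), M(i,j′)],[M(i′,j), M(i′,j′)]] satisfies M₂ᵀM₂ = (x_u² + x_v²)·I₂ identically, where x_u, x_v are its two variables. -/
open Matrix Finset

section rodAux
variable {p n k : ℕ} {s : Fin p → Fin n → ℤ} {f : Fin p → Fin n → Fin k}

lemma rod_sq_one (hs : ∀ i j, s i j = -1 ∨ s i j = 0 ∨ s i j = 1) {i j} (h : s i j ≠ 0) :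
    (s i j : ℝ) * (s i j : ℝ) = 1 := by
  rcases hs i j with h' | h' | h' <;> simp [h'] at h ⊢

lemma rod_card2 {α} [DecidableEq α] {a b c d : α} (hab : a ≠ b) (hac : a ≠ c) (hbd : b ≠ d)
    (h : ({a, b, c, d} : Finset α).card = 2) : d = a ∧ c = b := by
  have hda : d = a := by
    by_contra hda
    have hsub : ({a, b, d} : Finset α) ⊆ {a, b, c, d} := by
      intro x; simp only [Finset.mem_insert, Finset.mem_singleton]; tauto
    have h3 : ({a, b, d} : Finset α).card = 3 :=
      Finset.card_eq_three.mpr ⟨a, b, d, hab, fun h' => hda h'.symm, hbd, rfl⟩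
    have := Finset.card_le_card hsub
    omega
  refine ⟨hda, ?_⟩
  by_contra hcb
  have hsub : ({a, b, c} : Finset α) ⊆ {a, b, c, d} := by
    intro x; simp only [Finset.mem_insert, Finset.mem_singleton]; tauto
  have h3 : ({a, b, c} : Finset α).card = 3 :=
    Finset.card_eq_three.mpr ⟨a, b, c, hab, hac, fun h' => hcb h'.symm, rfl⟩
  have := Finset.card_le_card hsub
  omega

lemma rod_tr2 {α : Type*} (a b c d : α) : (!![a, b; c, d])ᵀ = !![a, c; b, d] := by
  ext r c'
  fin_cases r <;> fin_cases c' <;> rfl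

lemma rod_colUnique (hs : ∀ i j, s i j = -1 ∨ s i j = 0 ∨ s i j = 1)
    (H : ∀ (x : Fin k → ℝ) (j j' : Fin n),
      ∑ i, ((s i j : ℝ) * x (f i j)) * ((s i j' : ℝ) * x (f i j'))
        = (∑ v, x v ^ 2) * (if j = j' then 1 else 0))
    (j : Fin n) (v : Fin k) : ∃! i : Fin p, s i j ≠ 0 ∧ f i j = v := by
  classical
  have h := H (fun t => if t = v then 1 else 0) j j
  rw [if_pos rfl, mul_one] at h
  have hL : ∀ i : Fin p, ((s i j : ℝ) * (if f i j = v then 1 else 0)) *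
      ((s i j : ℝ) * (if f i j = v then 1 else 0))
      = if s i j ≠ 0 ∧ f i j = v then 1 else 0 := by
    intro i
    by_cases h1 : f i j = v <;> by_cases h2 : s i j ≠ 0 <;>
      simp_all [rod_sq_one, not_not]
  have hR : (∑ v' : Fin k, (if v' = v then (1:ℝ) else 0) ^ 2) = 1 := by
    simp [sq, ite_and]
  rw [hR] at h
  simp only [hL] at h
  rw [Finset.sum_boole] at h
  have hcard : (Finset.univ.filter (fun i : Fin p => s i j ≠ 0 ∧ f i j = v)).card = 1 := by
    exact_mod_cast h
  obtain ⟨a, ha⟩ := Finset.card_eq_one.mp hcard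
  refine ⟨a, ?_, ?_⟩
  · have : a ∈ Finset.univ.filter (fun i : Fin p => s i j ≠ 0 ∧ f i j = v) := by
      rw [ha]; exact Finset.mem_singleton_self a
    simpa using this
  · intro b hb
    have : b ∈ Finset.univ.filter (fun i : Fin p => s i j ≠ 0 ∧ f i j = v) := by
      simpa using hb
    rw [ha] at this; simpa using this

lemma rod_rowUnique
    (H : ∀ (x : Fin k → ℝ) (j j' : Fin n),
      ∑ i, ((s i j : ℝ) * x (f i j)) * ((s i j' : ℝ) * x (f i j'))
        = (∑ v, x v ^ 2) * (if j = j' then 1 else 0))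
    (colU : ∀ (j : Fin n) (v : Fin k), ∃! i : Fin p, s i j ≠ 0 ∧ f i j = v)
    (i : Fin p) (v : Fin k) (j j' : Fin n)
    (h1 : s i j ≠ 0) (h2 : f i j = v) (h3 : s i j' ≠ 0) (h4 : f i j' = v) : j = j' := by
  classical
  by_contra hjj
  have h := H (fun t => if t = v then 1 else 0) j j'
  rw [if_neg hjj, mul_zero] at h
  have hsum : ∑ i'' : Fin p, ((s i'' j : ℝ) * (if f i'' j = v then 1 else 0)) *
      ((s i'' j' : ℝ) * (if f i'' j' = v then 1 else 0)) =
      ((s i j : ℝ) * (if f i j = v then 1 else 0)) *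
      ((s i j' : ℝ) * (if f i j' = v then 1 else 0)) := by
    apply Finset.sum_eq_single_of_mem i (Finset.mem_univ i)
    intro b _ hb
    by_cases hb1 : f b j = v
    · by_cases hb2 : s b j = 0
      · simp [hb2]
      · exact absurd ((colU j v).unique ⟨hb2, hb1⟩ ⟨h1, h2⟩) hb
    · simp [hb1]
  rw [hsum, if_pos h2, if_pos h4] at h
  simp only [mul_one] at h
  rcases mul_eq_zero.mp h with h' | h'
  · exact h1 (by exact_mod_cast h')
  · exact h3 (by exact_mod_cast h')

lemma rod_pairSum
    (H : ∀ (x : Fin k → ℝ) (j j' : Fin n),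
      ∑ i, ((s i j : ℝ) * x (f i j)) * ((s i j' : ℝ) * x (f i j'))
        = (∑ v, x v ^ 2) * (if j = j' then 1 else 0))
    (colU : ∀ (j : Fin n) (v : Fin k), ∃! i : Fin p, s i j ≠ 0 ∧ f i j = v)
    (rowU : ∀ (i : Fin p) (v : Fin k) (j j' : Fin n),
        s i j ≠ 0 → f i j = v → s i j' ≠ 0 → f i j' = v → j = j')
    (i : Fin p) (j j' : Fin n) (hjj : j ≠ j') (h1 : s i j ≠ 0) (h2 : s i j' ≠ 0) :
    ∃ i' : Fin p, s i' j ≠ 0 ∧ f i' j = f i j' ∧ s i' j' ≠ 0 ∧ f i' j' = f i j ∧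
      (s i' j : ℝ) * (s i' j' : ℝ) = -((s i j : ℝ) * (s i j' : ℝ)) := by
  classical
  set u := f i j with hu
  set w := f i j' with hw
  have huw : u ≠ w := fun h => hjj (rowU i u j j' h1 rfl h2 h.symm)
  obtain ⟨i₂, ⟨hi₂s, hi₂f⟩, hi₂u⟩ := colU j w
  have hii₂ : i ≠ i₂ := fun h => huw (by rw [hu, h]; exact hi₂f)
  set x : Fin k → ℝ := fun t => if t = u ∨ t = w then 1 else 0 with hx
  have h := H x j j'
  rw [if_neg hjj, mul_zero] at h
  set T : Fin p → ℝ :=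
    fun i'' => ((s i'' j : ℝ) * x (f i'' j)) * ((s i'' j' : ℝ) * x (f i'' j')) with hT
  have hzero : ∀ c ∈ (Finset.univ : Finset (Fin p)), c ≠ i ∧ c ≠ i₂ → T c = 0 := by
    intro c _ ⟨hc1, hc2⟩
    by_cases hc3 : s c j = 0
    · simp [T, hc3]
    by_cases hc4 : f c j = u ∨ f c j = w
    · rcases hc4 with hc4 | hc4
      · exact absurd ((colU j u).unique ⟨hc3, hc4⟩ ⟨h1, rfl⟩) hc1
      · exact absurd (hi₂u c ⟨hc3, hc4⟩) hc2
    · simp [T, x, hc4]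
  have hsum : ∑ i'' : Fin p, T i'' = T i + T i₂ :=
    Finset.sum_eq_add_of_mem i i₂ (Finset.mem_univ i) (Finset.mem_univ i₂) hii₂ hzero
  rw [hsum] at h
  have hTi : T i = (s i j : ℝ) * (s i j' : ℝ) := by
    simp [T, x, ← hu, ← hw]
  have hTi₂ : T i₂ = -((s i j : ℝ) * (s i j' : ℝ)) := by linarith [h, hTi]
  have hne : T i₂ ≠ 0 := by
    rw [hTi₂]
    simp only [ne_eq, neg_eq_zero]
    exact mul_ne_zero (by exact_mod_cast h1) (by exact_mod_cast h2)
  have hs2 : s i₂ j' ≠ 0 := by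
    intro h0
    apply hne
    simp [T, h0]
  have hf2 : f i₂ j' = u := by
    have hmem : f i₂ j' = u ∨ f i₂ j' = w := by
      by_contra hc
      apply hne
      simp [T, x, hc]
    rcases hmem with h' | h'
    · exact h'
    · exact absurd (rowU i₂ w j j' hi₂s hi₂f hs2 h') hjj
  refine ⟨i₂, hi₂s, hi₂f, hs2, hf2, ?_⟩
  rw [← hTi₂]
  simp [T, x, hi₂f, hf2, huw]

end rodAux

/-- characterization of RODs in terms of proper 2×2 submatrices.
The matrix `M` is encoded by a sign function `s` (values in {−1,0,1}) and a
variable-index function `f`, via `M(i,j) = s(i,j) · x_{f(i,j)}`. -/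
theorem stmt1 (p n k : ℕ) (hp : 0 < p) (hn : 0 < n) (hk : 0 < k)
    (s : Fin p → Fin n → ℤ) (hs : ∀ i j, s i j = -1 ∨ s i j = 0 ∨ s i j = 1)
    (f : Fin p → Fin n → Fin k) :
    -- (1) M is a ROD
    (∀ x : Fin k → ℝ,
        (Matrix.of fun (i : Fin p) (j : Fin n) => (s i j : ℝ) * x (f i j))ᵀ *
          (Matrix.of fun (i : Fin p) (j : Fin n) => (s i j : ℝ) * x (f i j)) =
        (∑ v, x v ^ 2) • (1 : Matrix (Fin n) (Fin n) ℝ))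
    ↔
    -- (2i) each variable appears exactly once in each column and at most once in each row
    ((∀ (j : Fin n) (v : Fin k), ∃! i : Fin p, s i j ≠ 0 ∧ f i j = v) ∧
     (∀ (i : Fin p) (v : Fin k) (j j' : Fin n),
        s i j ≠ 0 → f i j = v → s i j' ≠ 0 → f i j' = v → j = j') ∧
    -- (2ii) completion property
     (∀ (i : Fin p) (j j' : Fin n), j ≠ j' → s i j ≠ 0 → s i j' ≠ 0 →
        ∃ i' : Fin p, s i' j' ≠ 0 ∧ f i' j' = f i j ∧ s i' j ≠ 0 ∧ f i' j = f i j') ∧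
    -- (2iii) every proper 2×2 submatrix is a ROD
     (∀ (i i' : Fin p) (j j' : Fin n), i ≠ i' → j ≠ j' →
        s i j ≠ 0 → s i j' ≠ 0 → s i' j ≠ 0 → s i' j' ≠ 0 →
        ({f i j, f i j', f i' j, f i' j'} : Finset (Fin k)).card = 2 →
        ∀ x : Fin k → ℝ,
          (!![(s i j : ℝ) * x (f i j), (s i j' : ℝ) * x (f i j');
              (s i' j : ℝ) * x (f i' j), (s i' j' : ℝ) * x (f i' j')])ᵀ *
          (!![(s i j : ℝ) * x (f i j), (s i j' : ℝ) * x (f i j');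
              (s i' j : ℝ) * x (f i' j), (s i' j' : ℝ) * x (f i' j')]) =
          (∑ w ∈ ({f i j, f i j', f i' j, f i' j'} : Finset (Fin k)), x w ^ 2) •
            (1 : Matrix (Fin 2) (Fin 2) ℝ))) := by
  classical
  constructor
  · -- forward
    intro H
    have Hsum : ∀ (x : Fin k → ℝ) (j j' : Fin n),
        ∑ i, ((s i j : ℝ) * x (f i j)) * ((s i j' : ℝ) * x (f i j'))
          = (∑ v, x v ^ 2) * (if j = j' then 1 else 0) := by
      intro x j j'
      have := congrFun (congrFun (H x) j) j'
      simpa [Matrix.mul_apply, Matrix.one_apply, mul_ite] using this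
    have colU := rod_colUnique hs Hsum
    have rowU := rod_rowUnique Hsum colU
    refine ⟨colU, rowU, ?_, ?_⟩
    · intro i j j' hjj h1 h2
      obtain ⟨i', a1, a2, a3, a4, _⟩ := rod_pairSum Hsum colU rowU i j j' hjj h1 h2
      exact ⟨i', a3, a4, a1, a2⟩
    · intro i i' j j' hii hjj h1 h2 h3 h4 hcard x
      -- identify variable structure
      have hab : f i j ≠ f i j' := fun h => hjj (rowU i (f i j) j j' h1 rfl h2 h.symm)
      have hac : f i j ≠ f i' j := fun h => hii ((colU j (f i j)).unique ⟨h1, rfl⟩ ⟨h3, h.symm⟩)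
      have hbd : f i j' ≠ f i' j' :=
        fun h => hii ((colU j' (f i j')).unique ⟨h2, rfl⟩ ⟨h4, h.symm⟩)
      obtain ⟨hda, hcb⟩ := rod_card2 hab hac hbd hcard
      -- sign relation
      obtain ⟨i₂, a1, a2, a3, a4, a5⟩ := rod_pairSum Hsum colU rowU i j j' hjj h1 h2
      have hi₂ : i₂ = i' := (colU j (f i j')).unique ⟨a1, a2⟩ ⟨h3, hcb⟩
      rw [hi₂] at a5
      -- the finset of variables is {f i j, f i j'}
      have hset : ({f i j, f i j', f i' j, f i' j'} : Finset (Fin k))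
          = {f i j, f i j'} := by
        rw [hda, hcb]
        ext t
        simp only [Finset.mem_insert, Finset.mem_singleton]
        tauto
      have hsq1 := rod_sq_one hs h1
      have hsq2 := rod_sq_one hs h2
      have hsq3 := rod_sq_one hs h3
      have hsq4 := rod_sq_one hs h4
      rw [hset, Finset.sum_pair hab, hda, hcb, rod_tr2, Matrix.mul_fin_two]
      ext r c
      fin_cases r <;> fin_cases c <;> simp [Matrix.one_apply]
      · linear_combination (x (f i j)) ^ 2 * hsq1 + (x (f i j')) ^ 2 * hsq3
      · linear_combination (x (f i j) * x (f i j')) * a5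
      · linear_combination (x (f i j) * x (f i j')) * a5
      · linear_combination (x (f i j')) ^ 2 * hsq2 + (x (f i j)) ^ 2 * hsq4
  · -- backward
    rintro ⟨colU, rowU, comp, two⟩ x
    ext j j'
    simp only [Matrix.mul_apply, Matrix.transpose_apply, Matrix.of_apply,
      Matrix.smul_apply, Matrix.one_apply, smul_eq_mul, mul_ite, mul_one, mul_zero]
    by_cases hjj : j = j'
    · subst hjj
      rw [if_pos rfl]
      have step1 : ∑ i : Fin p, ((s i j : ℝ) * x (f i j)) * ((s i j : ℝ) * x (f i j))
          = ∑ i ∈ Finset.univ.filter (fun i : Fin p => s i j ≠ 0), x (f i j) ^ 2 := by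
        rw [Finset.sum_filter]
        apply Finset.sum_congr rfl
        intro i _
        by_cases h0 : s i j = 0
        · simp [h0]
        · rw [if_pos h0]
          linear_combination x (f i j) ^ 2 * rod_sq_one hs h0
      rw [step1]
      apply Finset.sum_bij (fun i _ => f i j)
      · intro a _; exact Finset.mem_univ _
      · intro a ha b hb hfab
        simp only [Finset.mem_filter] at ha hb
        exact (colU j (f a j)).unique ⟨ha.2, rfl⟩ ⟨hb.2, hfab.symm⟩
      · intro v _
        obtain ⟨i, ⟨hi1, hi2⟩, _⟩ := colU j v
        exact ⟨i, Finset.mem_filter.mpr ⟨Finset.mem_univ _, hi1⟩, hi2⟩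
      · intro a _; rfl
    · rw [if_neg hjj]
      set T : Fin p → ℝ :=
        fun i => ((s i j : ℝ) * x (f i j)) * ((s i j' : ℝ) * x (f i j')) with hT
      set g : Fin p → Fin p := fun i =>
        if h : s i j ≠ 0 ∧ s i j' ≠ 0 then (comp i j j' hjj h.1 h.2).choose else i with hg
      have hspec : ∀ i (h : s i j ≠ 0 ∧ s i j' ≠ 0),
          s (g i) j' ≠ 0 ∧ f (g i) j' = f i j ∧ s (g i) j ≠ 0 ∧ f (g i) j = f i j' := by
        intro i h
        rw [hg]
        simp only [dif_pos h]
        exact (comp i j j' hjj h.1 h.2).choose_spec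
      apply Finset.sum_ninvolution g
      · -- T a + T (g a) = 0
        intro a
        by_cases h : s a j ≠ 0 ∧ s a j' ≠ 0
        · obtain ⟨b1, b2, b3, b4⟩ := hspec a h
          have hvne : f a j ≠ f a j' :=
            fun hv => hjj (rowU a (f a j) j j' h.1 rfl h.2 hv.symm)
          have hane : a ≠ g a := by
            intro hv
            apply hvne
            rw [← b4, ← hv]
          have hset : ({f a j, f a j', f (g a) j, f (g a) j'} : Finset (Fin k))
              = {f a j, f a j'} := by
            rw [b2, b4]
            ext t
            simp only [Finset.mem_insert, Finset.mem_singleton]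
            tauto
          have hcard : ({f a j, f a j', f (g a) j, f (g a) j'} : Finset (Fin k)).card = 2 := by
            rw [hset]; exact Finset.card_pair hvne
          have h2x := two a (g a) j j' hane hjj h.1 h.2 b3 b1 hcard x
          rw [rod_tr2, Matrix.mul_fin_two] at h2x
          have hentry := congrFun (congrFun h2x 0) 1
          simp only [b2, b4] at hentry
          simp [Matrix.one_apply] at hentry
          simp only [hT, b2, b4]
          linear_combination hentry
        · have hga : g a = a := by rw [hg]; simp [h]
          rw [hga]
          rw [not_and_or, not_not, not_not] at h
          rcases h with h | h <;> simp [T, h]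
      · -- T a ≠ 0 → g a ≠ a
        intro a hTa
        have h : s a j ≠ 0 ∧ s a j' ≠ 0 := by
          constructor <;> intro h0 <;> apply hTa <;> simp [T, h0]
        obtain ⟨b1, b2, b3, b4⟩ := hspec a h
        intro hga
        have hvne : f a j ≠ f a j' :=
          fun hv => hjj (rowU a (f a j) j j' h.1 rfl h.2 hv.symm)
        rw [hga] at b4
        exact hvne b4
      · intro a; exact Finset.mem_univ _
      · -- involution
        intro a
        by_cases h : s a j ≠ 0 ∧ s a j' ≠ 0
        · obtain ⟨b1, b2, b3, b4⟩ := hspec a h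
          have h2 : s (g a) j ≠ 0 ∧ s (g a) j' ≠ 0 := ⟨b3, b1⟩
          obtain ⟨c1, c2, c3, c4⟩ := hspec (g a) h2
          -- g (g a) has s _ j ≠ 0 and f _ j = f (g a) j' = f a j
          rw [b2] at c4
          exact (colU j (f a j)).unique ⟨c3, c4⟩ ⟨h.1, rfl⟩
        · have hga : g a = a := by rw [hg]; simp [h]
          rw [hga, hga]
end

section
/- Let p, n, k ≥ 1 and let A_i, B_i (0 ≤ i < k) be complex p×n matrices such that: (a) for all x ∈ ℂ^k, G(x) = Σ_{i<k} (x_i A_i + conj(x_i) B_i) satisfies G(x)ᴴG(x) = (Σ_{i<k} |x_i|²)·I_n; (b) at every position (r,c), at most one entry among {A_i(r,c), B_i(r,c) : 0 ≤ i < k} is nonzero; (c) there exists a column index c < n such that every nonzero entry among A_i(r,c), B_i(r,c) (0 ≤ r < p, 0 ≤ i < k) has modulus 1/√2. Then 2k ≤ p. In other words, the maximal rate k/p of a scaled COD with scaling in at least one column is 1/2. -/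
open Matrix

/-- a scaled COD (dispersion matrices `A_i, B_i`, at most one nonzero entry
among them at each position) in which some column carries the scaling factor `1/√2` on all
its nonzero entries satisfies `2k ≤ p`; i.e., the maximal rate of a scaled COD with
scaling in at least one column is `1/2`. -/
theorem stmt8 (p n k : ℕ) (hp : 0 < p) (hn : 0 < n) (hk : 0 < k)
    (A B : Fin k → Matrix (Fin p) (Fin n) ℂ)
    (ha : ∀ x : Fin k → ℂ,
      (∑ i, (x i • A i + (starRingEnd ℂ) (x i) • B i))ᴴ *
        (∑ i, (x i • A i + (starRingEnd ℂ) (x i) • B i)) =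
      (∑ i, (Complex.normSq (x i) : ℂ)) • (1 : Matrix (Fin n) (Fin n) ℂ))
    (hb : ∀ (r : Fin p) (c : Fin n) (s₁ s₂ : Fin k × Bool),
      (cond s₁.2 (A s₁.1) (B s₁.1)) r c ≠ 0 →
      (cond s₂.2 (A s₂.1) (B s₂.1)) r c ≠ 0 → s₁ = s₂)
    (hc : ∃ c : Fin n, ∀ (r : Fin p) (i : Fin k),
      (A i r c ≠ 0 → ‖A i r c‖ = (Real.sqrt 2)⁻¹) ∧
      (B i r c ≠ 0 → ‖B i r c‖ = (Real.sqrt 2)⁻¹)) :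
    2 * k ≤ p := by
  obtain ⟨c, hc⟩ := hc
  -- Step 1: for each i, (A i + B i)ᴴ (A i + B i) = 1
  have step1 : ∀ i : Fin k, (A i + B i)ᴴ * (A i + B i) = 1 := by
    intro i
    have h := ha (fun j => if j = i then 1 else 0)
    have e1 : (∑ j, ((if j = i then (1:ℂ) else 0) • A j +
        (starRingEnd ℂ) (if j = i then (1:ℂ) else 0) • B j)) = A i + B i := by
      rw [Finset.sum_eq_single i]
      · simp
      · intro j _ hj
        simp [hj]
      · simp
    have e2 : (∑ j, (Complex.normSq (if j = i then (1:ℂ) else 0) : ℂ)) = 1 := by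
      rw [Finset.sum_eq_single i] <;> simp +contextual
    rw [e1, e2] at h
    simpa using h
  -- Step 2: each i contributes exactly 2 nonzero entries in column c
  have step2 : ∀ i : Fin k,
      ((Finset.univ.filter (fun r => A i r c ≠ 0)).card +
       (Finset.univ.filter (fun r => B i r c ≠ 0)).card) = 2 := by
    intro i
    have h2 := congrFun (congrFun (step1 i) c) c
    rw [Matrix.mul_apply, Matrix.one_apply_eq] at h2
    have h3 : (∑ r, (Complex.normSq ((A i + B i) r c) : ℂ)) = 1 := by
      rw [← h2]
      refine Finset.sum_congr rfl fun r _ => ?_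
      rw [conjTranspose_apply, Complex.normSq_eq_conj_mul_self]
      rfl
    have h4 : (∑ r, Complex.normSq ((A i + B i) r c)) = 1 := by
      exact_mod_cast h3
    have key : ∀ r : Fin p, Complex.normSq ((A i + B i) r c) =
        (if A i r c ≠ 0 then (1/2 : ℝ) else 0) + (if B i r c ≠ 0 then (1/2:ℝ) else 0) := by
      intro r
      have habs : ∀ z : ℂ, ‖z‖ = (Real.sqrt 2)⁻¹ → Complex.normSq z = 1/2 := by
        intro z hz
        rw [← Complex.sq_norm, hz, ← Real.sqrt_inv, Real.sq_sqrt (by norm_num)]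
        norm_num
      by_cases hA : A i r c = 0
      · by_cases hB : B i r c = 0
        · simp [hA, hB]
        · simp [hA, hB, habs _ ((hc r i).2 hB)]
      · have hB : B i r c = 0 := by
          by_contra hB
          have := hb r c (i, true) (i, false) (by simpa using hA) (by simpa using hB)
          simp at this
        simp [hA, hB, habs _ ((hc r i).1 hA)]
    rw [Finset.sum_congr rfl (fun r _ => key r), Finset.sum_add_distrib,
      Finset.sum_ite, Finset.sum_ite] at h4
    simp only [Finset.sum_const, Finset.sum_const_zero, add_zero, nsmul_eq_mul] at h4
    have : ((Finset.univ.filter (fun r => A i r c ≠ 0)).card +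
       (Finset.univ.filter (fun r => B i r c ≠ 0)).card : ℝ) = 2 := by
      linarith
    exact_mod_cast this
  -- Step 3: each row carries at most one nonzero entry in column c among all matrices
  have step3 : ∀ r : Fin p,
      (∑ i, ((if A i r c ≠ 0 then 1 else 0) + (if B i r c ≠ 0 then 1 else 0))) ≤ 1 := by
    intro r
    have e : (∑ i, ((if A i r c ≠ 0 then 1 else 0) + (if B i r c ≠ 0 then 1 else 0)))
        = (Finset.univ.filter
            (fun t : Fin k × Bool => (cond t.2 (A t.1) (B t.1)) r c ≠ 0)).card := by
      rw [Finset.card_filter, Fintype.sum_prod_type]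
      refine Finset.sum_congr rfl fun i _ => ?_
      simp [Fintype.sum_bool, add_comm]
    rw [e]
    apply Finset.card_le_one.2
    intro a ha' b hb'
    simp only [Finset.mem_filter] at ha' hb'
    exact hb r c a b ha'.2 hb'.2
  -- Assemble: count nonzero entries in column c two ways
  calc 2 * k = ∑ i : Fin k, 2 := by simp [mul_comm]
    _ = ∑ i : Fin k, ((Finset.univ.filter (fun r => A i r c ≠ 0)).card +
          (Finset.univ.filter (fun r => B i r c ≠ 0)).card) :=
        (Finset.sum_congr rfl fun i _ => (step2 i).symm)
    _ = ∑ i : Fin k, ∑ r : Fin p,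
          ((if A i r c ≠ 0 then 1 else 0) + (if B i r c ≠ 0 then 1 else 0)) := by
        refine Finset.sum_congr rfl fun i _ => ?_
        rw [Finset.sum_add_distrib, Finset.card_filter, Finset.card_filter]
    _ = ∑ r : Fin p, ∑ i : Fin k,
          ((if A i r c ≠ 0 then 1 else 0) + (if B i r c ≠ 0 then 1 else 0)) :=
        Finset.sum_comm
    _ ≤ ∑ r : Fin p, 1 := Finset.sum_le_sum fun r _ => step3 r
    _ = p := by simp
end

section
/- For positive integers p, n, k, the following are equivalent: (1) there exist real p×n matrices A_0,…,A_{k−1} such that for all x ∈ ℝ^k, (Σ_{i<k} x_i A_i)ᵀ(Σ_{i<k} x_i A_i) = (Σ_{i<k} x_i²)·I_n (i.e., a ROD of size [p,n,k] exists); (2) there exists a map f : ℝ^k × ℝ^n → ℝ^p, linear in each argument separately, such that ‖f(x,y)‖ = ‖x‖·‖y‖ for all x ∈ ℝ^k and y ∈ ℝ^n, where ‖·‖ denotes the Euclidean norm (i.e., a normed real bilinear map of size [p,n,k] exists). -/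
open Matrix

lemma euc_norm_sq {m : ℕ} (v : EuclideanSpace ℝ (Fin m)) : ‖v‖^2 = ∑ i, v i ^2 := by
  rw [EuclideanSpace.norm_eq, Real.sq_sqrt] <;> simp [Real.norm_eq_abs, sq_abs]
  positivity

lemma mulVec_dot {m q : ℕ} (M : Matrix (Fin q) (Fin m) ℝ) (y : Fin m → ℝ) :
    (M *ᵥ y) ⬝ᵥ (M *ᵥ y) = y ⬝ᵥ ((Mᵀ*M) *ᵥ y) := by
  rw [dotProduct_mulVec, ← mulVec_transpose, mulVec_mulVec, dotProduct_comm,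
    dotProduct_mulVec, ← mulVec_transpose]

lemma polarize {m : ℕ} (S : Matrix (Fin m) (Fin m) ℝ) (hS : Sᵀ = S) (c : ℝ)
    (h : ∀ y : Fin m → ℝ, y ⬝ᵥ (S *ᵥ y) = c * (y ⬝ᵥ y)) : S = c • 1 := by
  ext i j
  have hii := h (Pi.single i 1)
  have hjj := h (Pi.single j 1)
  have hij := h (Pi.single i 1 + Pi.single j 1)
  simp [dotProduct, mulVec, Pi.single_apply, Finset.sum_ite_eq, Finset.sum_ite_eq',
    mul_add, add_mul, Finset.sum_add_distrib] at hii hjj hij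
  have hsym : S j i = S i j := by conv_lhs => rw [← hS, transpose_apply]
  by_cases hd : i = j
  · subst hd; simp [Matrix.one_apply, hii]
  · have hd' : ¬ j = i := fun h => hd h.symm
    simp only [Matrix.smul_apply, Matrix.one_apply, hd, if_false, smul_zero]
    rw [if_neg hd, if_neg hd'] at hij
    linarith

lemma sum_apply_euc {m k : ℕ} (v : Fin k → EuclideanSpace ℝ (Fin m)) (j : Fin m) (c : Fin k → ℝ) :
    (∑ i, c i • v i) j = ∑ i, c i * v i j := by
  have h : (WithLp.linearEquiv 2 ℝ (Fin m → ℝ)) (∑ i, c i • v i)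
      = ∑ i, c i • (WithLp.linearEquiv 2 ℝ (Fin m → ℝ)) (v i) := by
    simp [map_sum]
  calc (∑ i, c i • v i) j
      = ((WithLp.linearEquiv 2 ℝ (Fin m → ℝ)) (∑ i, c i • v i)) j := rfl
    _ = (∑ i, c i • (WithLp.linearEquiv 2 ℝ (Fin m → ℝ)) (v i)) j := by rw [h]
    _ = ∑ i, (c i • (WithLp.linearEquiv 2 ℝ (Fin m → ℝ)) (v i)) j := Finset.sum_apply _ _ _
    _ = ∑ i, c i * v i j := rfl

lemma euc_decomp {k : ℕ} (x : EuclideanSpace ℝ (Fin k)) :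
    x = ∑ i, x i • EuclideanSpace.single i (1:ℝ) := by
  apply PiLp.ext
  intro j
  rw [sum_apply_euc]
  simp [EuclideanSpace.single_apply]

/-- a ROD of size `[p,n,k]` (with arbitrary real linear-combination entries)
exists if and only if a normed real bilinear map of size `[p,n,k]` exists. -/
theorem stmt10 (p n k : ℕ) (hp : 0 < p) (hn : 0 < n) (hk : 0 < k) :
    (∃ A : Fin k → Matrix (Fin p) (Fin n) ℝ,
      ∀ x : Fin k → ℝ,
        (∑ i, x i • A i)ᵀ * (∑ i, x i • A i) =
          (∑ i, x i ^ 2) • (1 : Matrix (Fin n) (Fin n) ℝ))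
    ↔
    (∃ f : EuclideanSpace ℝ (Fin k) → EuclideanSpace ℝ (Fin n) → EuclideanSpace ℝ (Fin p),
      (∀ y, IsLinearMap ℝ fun x => f x y) ∧
      (∀ x, IsLinearMap ℝ (f x)) ∧
      (∀ x y, ‖f x y‖ = ‖x‖ * ‖y‖)) := by
  constructor
  · rintro ⟨A, hA⟩
    refine ⟨fun x y => (WithLp.equiv 2 (Fin p → ℝ)).symm
        ((∑ i, x i • A i) *ᵥ (fun b => y b)), ?_, ?_, ?_⟩
    · intro y
      constructor
      · intro x x'
        rw [WithLp.equiv_symm_apply, ← WithLp.toLp_add]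
        apply congrArg
        have h : ∀ i : Fin k, (x + x') i = x i + x' i := fun i => rfl
        funext j
        simp only [mulVec, dotProduct, Matrix.sum_apply, Matrix.smul_apply, smul_eq_mul, h,
          Pi.add_apply, Equiv.toFun_as_coe, WithLp.equiv_apply, WithLp.ofLp_toLp]
        rw [← Finset.sum_add_distrib]
        apply Finset.sum_congr rfl; intro b _
        rw [← add_mul, ← Finset.sum_add_distrib]
        congr 1
        apply Finset.sum_congr rfl; intro i _
        ring
      · intro c x
        rw [WithLp.equiv_symm_apply, ← WithLp.toLp_smul]
        apply congrArg
        have h : ∀ i : Fin k, (c • x) i = c * x i := fun i => rfl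
        funext j
        simp only [mulVec, dotProduct, Matrix.sum_apply, Matrix.smul_apply, smul_eq_mul, h,
          Pi.smul_apply, Equiv.toFun_as_coe, WithLp.equiv_apply, WithLp.ofLp_toLp]
        rw [Finset.mul_sum]
        apply Finset.sum_congr rfl; intro b _
        rw [Finset.sum_mul, Finset.sum_mul, Finset.mul_sum]
        apply Finset.sum_congr rfl; intro i _
        ring
    · intro x
      constructor
      · intro y y'
        rw [WithLp.equiv_symm_apply, ← WithLp.toLp_add]
        apply congrArg
        have h : ∀ b : Fin n, (y + y') b = y b + y' b := fun b => rfl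
        funext j
        simp only [mulVec, dotProduct, h, mul_add, Pi.add_apply]
        exact Finset.sum_add_distrib
      · intro c y
        rw [WithLp.equiv_symm_apply, ← WithLp.toLp_smul]
        apply congrArg
        have h : ∀ b : Fin n, (c • y) b = c * y b := fun b => rfl
        funext j
        simp only [mulVec, dotProduct, h, Pi.smul_apply, smul_eq_mul, Equiv.toFun_as_coe,
          WithLp.equiv_apply, WithLp.ofLp_toLp]
        rw [Finset.mul_sum]
        apply Finset.sum_congr rfl; intro b _
        ring
    · intro x y
      set v : EuclideanSpace ℝ (Fin p) :=
        (WithLp.equiv 2 (Fin p → ℝ)).symm ((∑ i, x i • A i) *ᵥ (fun b => y b)) with hv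
      have key : ((∑ i, x i • A i) *ᵥ (fun b => y b)) ⬝ᵥ ((∑ i, x i • A i) *ᵥ (fun b => y b))
          = (∑ i, x i ^ 2) * ((fun b => y b) ⬝ᵥ (fun b => y b)) := by
        rw [mulVec_dot, hA x]
        simp [smul_mulVec, one_mulVec, dotProduct_smul, smul_eq_mul]
      have h1 : ‖v‖^2 = (‖x‖ * ‖y‖)^2 := by
        rw [euc_norm_sq v, mul_pow, euc_norm_sq x, euc_norm_sq y]
        calc ∑ j, v j ^ 2
            = ((∑ i, x i • A i) *ᵥ (fun b => y b)) ⬝ᵥ ((∑ i, x i • A i) *ᵥ (fun b => y b)) := by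
              simp [hv, dotProduct, sq, WithLp.equiv_symm_apply, PiLp.toLp_apply]
          _ = (∑ i, x i ^ 2) * (∑ b, y b ^ 2) := by rw [key]; simp [dotProduct, sq]
      calc ‖v‖ = Real.sqrt (‖v‖^2) := (Real.sqrt_sq (norm_nonneg v)).symm
        _ = Real.sqrt ((‖x‖*‖y‖)^2) := by rw [h1]
        _ = ‖x‖ * ‖y‖ := Real.sqrt_sq (by positivity)
  · rintro ⟨f, hfl, hfr, hfn⟩
    refine ⟨fun i => Matrix.of fun a b =>
      f (EuclideanSpace.single i 1) (EuclideanSpace.single b 1) a, ?_⟩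
    intro x
    set x' : EuclideanSpace ℝ (Fin k) := WithLp.toLp 2 (fun i => x i) with hx'
    have hM : ∀ y : EuclideanSpace ℝ (Fin n),
        ((∑ i, x i • Matrix.of fun a b =>
          f (EuclideanSpace.single i 1) (EuclideanSpace.single b 1) a) *ᵥ (fun b => y b))
        = fun a => f x' y a := by
      intro y
      funext a
      have hx : f x' y = ∑ i, x i • f (EuclideanSpace.single i 1) y := by
        conv_lhs => rw [euc_decomp x']
        have h := map_sum (IsLinearMap.mk' (fun z => f z y) (hfl y))
          (fun i => x' i • EuclideanSpace.single i (1:ℝ)) Finset.univ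
        simp only [IsLinearMap.mk'_apply] at h
        rw [h]
        apply Finset.sum_congr rfl; intro i _
        exact (hfl y).map_smul (x' i) _
      have hy : ∀ i, f (EuclideanSpace.single i (1:ℝ)) y
          = ∑ b, y b • f (EuclideanSpace.single i 1) (EuclideanSpace.single b 1) := by
        intro i
        conv_lhs => rw [euc_decomp y]
        have h := map_sum (IsLinearMap.mk' (f (EuclideanSpace.single i (1:ℝ))) (hfr _))
          (fun b => y b • EuclideanSpace.single b (1:ℝ)) Finset.univ
        simp only [IsLinearMap.mk'_apply] at h
        rw [h]
        apply Finset.sum_congr rfl; intro b _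
        exact (hfr _).map_smul (y b) _
      rw [hx, sum_apply_euc]
      simp only [hy, sum_apply_euc]
      simp only [mulVec, dotProduct, Matrix.sum_apply, Matrix.smul_apply, Matrix.of_apply,
        smul_eq_mul, Finset.sum_mul]
      rw [Finset.sum_comm]
      apply Finset.sum_congr rfl; intro i _
      rw [Finset.mul_sum]
      apply Finset.sum_congr rfl; intro b _
      ring
    apply polarize
    · rw [transpose_mul, transpose_transpose]
    · intro y
      set y' : EuclideanSpace ℝ (Fin n) := WithLp.toLp 2 (fun b => y b) with hy'
      have h0 : (fun b => y' b) = y := rfl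
      have h1 := mulVec_dot (∑ i, x i • Matrix.of fun a b =>
          f (EuclideanSpace.single i 1) (EuclideanSpace.single b 1) a) y
      rw [← h0, hM y'] at h1
      have h2 : (fun a => f x' y' a) ⬝ᵥ (fun a => f x' y' a) = ‖f x' y'‖^2 := by
        rw [euc_norm_sq]; simp [dotProduct, sq]
      have h3 : ‖f x' y'‖^2 = (∑ i, x i ^2) * (y ⬝ᵥ y) := by
        rw [hfn x' y', mul_pow, euc_norm_sq x', euc_norm_sq y']
        simp [dotProduct, sq, hx', hy']
      rw [← h1, h2, h3]
end

section
/- Let p, n, k be positive integers. If there exist complex p×n matrices A_i, B_i (0 ≤ i < k) such that for all x ∈ ℂ^k, G(x) = Σ_{i<k} (x_i A_i + conj(x_i) B_i) satisfies G(x)ᴴG(x) = (Σ_{i<k} |x_i|²)·I_n, then there exist real 2p×2n matrices C_0,…,C_{2k−1} such that for all u ∈ ℝ^{2k}, (Σ_{j<2k} u_j C_j)ᵀ(Σ_{j<2k} u_j C_j) = (Σ_{j<2k} u_j²)·I_{2n}. That is, existence of a [p,n,k] complex design implies existence of a [2p,2n,2k] real design, obtained by replacing each complex entry by its 2×2 real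 matrix representation. -/
open Matrix Complex

section Aux
variable {p n m : ℕ}

def phiFun (M : Matrix (Fin p) (Fin n) ℂ) :
    Matrix (Fin p ⊕ Fin p) (Fin n ⊕ Fin n) ℝ :=
  fromBlocks (M.map Complex.re) (-(M.map Complex.im)) (M.map Complex.im) (M.map Complex.re)

def phi : Matrix (Fin p) (Fin n) ℂ →ₗ[ℝ] Matrix (Fin p ⊕ Fin p) (Fin n ⊕ Fin n) ℝ where
  toFun := phiFun
  map_add' M N := by
    ext i j
    cases i <;> cases j <;> simp [phiFun] <;> ring
  map_smul' r M := by
    ext i j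
    cases i <;> cases j <;> simp [phiFun, mul_comm]

lemma phi_conjTranspose (M : Matrix (Fin p) (Fin n) ℂ) :
    phi Mᴴ = (phi M)ᵀ := by
  ext i j
  cases i <;> cases j <;> simp [phi, phiFun]

lemma phi_mul (M : Matrix (Fin p) (Fin n) ℂ) (N : Matrix (Fin n) (Fin m) ℂ) :
    phi (M * N) = phi M * phi N := by
  ext i j
  cases i <;> cases j <;>
    simp [phi, phiFun, Matrix.mul_apply, Fintype.sum_sum_type, Complex.mul_re,
      Complex.mul_im, Finset.sum_add_distrib, Finset.sum_sub_distrib] <;> ring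

lemma phi_smul_one (r : ℝ) :
    phi ((r : ℂ) • (1 : Matrix (Fin n) (Fin n) ℂ)) = r • 1 := by
  ext i j
  cases i <;> cases j <;>
    simp [phi, phiFun, Matrix.one_apply, Matrix.smul_apply, apply_ite] <;>
    aesop

lemma key_combine (a b : ℝ) (A B : Matrix (Fin p) (Fin n) ℂ) :
    a • (A + B) + b • (Complex.I • (A - B)) =
      ((a : ℂ) + b * Complex.I) • A + ((a : ℂ) - b * Complex.I) • B := by
  ext i j
  simp [Matrix.smul_apply]
  ring

end Aux


/-- existence of a `[p,n,k]` complex design (with arbitrary complex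
linear-combination entries) implies existence of a `[2p,2n,2k]` real design. -/
theorem stmt11 (p n k : ℕ) (hp : 0 < p) (hn : 0 < n) (hk : 0 < k)
    (h : ∃ A B : Fin k → Matrix (Fin p) (Fin n) ℂ,
      ∀ x : Fin k → ℂ,
        (∑ i, (x i • A i + (starRingEnd ℂ) (x i) • B i))ᴴ *
          (∑ i, (x i • A i + (starRingEnd ℂ) (x i) • B i)) =
        (∑ i, (Complex.normSq (x i) : ℂ)) • (1 : Matrix (Fin n) (Fin n) ℂ)) :
    ∃ C : Fin (2 * k) → Matrix (Fin (2 * p)) (Fin (2 * n)) ℝ,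
      ∀ u : Fin (2 * k) → ℝ,
        (∑ j, u j • C j)ᵀ * (∑ j, u j • C j) =
          (∑ j, u j ^ 2) • (1 : Matrix (Fin (2 * n)) (Fin (2 * n)) ℝ) := by
  obtain ⟨A, B, hAB⟩ := h
  let eP : Fin p ⊕ Fin p ≃ Fin (2 * p) := finSumFinEquiv.trans (finCongr (two_mul p).symm)
  let eN : Fin n ⊕ Fin n ≃ Fin (2 * n) := finSumFinEquiv.trans (finCongr (two_mul n).symm)
  let eK : Fin k ⊕ Fin k ≃ Fin (2 * k) := finSumFinEquiv.trans (finCongr (two_mul k).symm)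
  let D : Fin k ⊕ Fin k → Matrix (Fin p) (Fin n) ℂ :=
    Sum.elim (fun i => A i + B i) (fun i => Complex.I • (A i - B i))
  refine ⟨fun j => (phi (D (eK.symm j))).submatrix eP.symm eN.symm, fun u => ?_⟩
  set x : Fin k → ℂ := fun i => (u (eK (Sum.inl i)) : ℂ) + (u (eK (Sum.inr i)) : ℂ) * Complex.I
    with hx
  set Gx : Matrix (Fin p) (Fin n) ℂ :=
    ∑ i, (x i • A i + (starRingEnd ℂ) (x i) • B i) with hGx
  have hS : (∑ j, u j • (phi (D (eK.symm j))).submatrix eP.symm eN.symm)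
      = (phi Gx).submatrix eP.symm eN.symm := by
    have : (∑ j, u j • phi (D (eK.symm j))) = phi Gx := by
      rw [← Equiv.sum_comp eK (fun j => u j • phi (D (eK.symm j)))]
      simp only [Equiv.symm_apply_apply, ← _root_.map_smul, ← map_sum]
      congr 1
      rw [Fintype.sum_sum_type, hGx, ← Finset.sum_add_distrib]
      refine Finset.sum_congr rfl fun i _ => ?_
      simp only [D, Sum.elim_inl, Sum.elim_inr, hx]
      rw [key_combine]
      congr 1
      congr 1
      simp [Complex.ext_iff]
    rw [← this]
    ext i j
    simp [Matrix.submatrix_apply, Matrix.sum_apply]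
  rw [hS]
  have ht : ((phi Gx).submatrix eP.symm eN.symm)ᵀ = (phi Gx)ᵀ.submatrix eN.symm eP.symm := by
    simp [Matrix.transpose_submatrix]
  rw [ht, Matrix.submatrix_mul_equiv, ← phi_conjTranspose, ← phi_mul, hAB]
  have hcast : (∑ i, (Complex.normSq (x i) : ℂ)) = ((∑ j, u j ^ 2 : ℝ) : ℂ) := by
    rw [← Equiv.sum_comp eK (fun j => u j ^ 2), Fintype.sum_sum_type]
    push_cast
    rw [← Finset.sum_add_distrib]
    refine Finset.sum_congr rfl fun i _ => ?_
    simp [hx, Complex.normSq_apply]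
    ring
  rw [hcast, phi_smul_one]
  ext i j
  simp [Matrix.submatrix_apply, Matrix.smul_apply, Matrix.one_apply]
end

section
/- Let n ≥ 8 and let Q_n be the real n×n matrix with Q_n(i,j) = A(i,j) for 0 ≤ i,j < 8, Q_n(i,i) = 1 for 8 ≤ i < n, and Q_n(i,j) = 0 otherwise, where A(i,j) = 1/√2 if i < 4 and (j = i or j = 7−i); A(i,j) = 1/√2 if i ≥ 4 and j = 7−i; A(i,j) = −1/√2 if i ≥ 4 and j = i; and A(i,j) = 0 otherwise. Then: (1) Q_nᵀQ_n = I_n, so for any complex p×n matrix G with GᴴG = c·I_n (c a scalar polynomial in the design variables), also (G·Q_n)ᴴ(G·Q_n) = c·I_n; and (2) if G is a complex p×n matrix such that for every row r, for each j ∈ {0,1,2,3} exactly one of G(r,j) and G(r,7−j) is nonzero, and G(r,j) ≠ 0 for all 8 ≤ j < n, then every entry of G·Q_n is nonzero. -/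
open Matrix

/-- The 8×8 block `A`: `A(i,j) = 1/√2` if `i < 4` and (`j = i` or `j = 7−i`);
`A(i,j) = 1/√2` if `i ≥ 4` and `j = 7−i`; `A(i,j) = −1/√2` if `i ≥ 4` and `j = i`;
`A(i,j) = 0` otherwise. -/
noncomputable def Aent (i j : ℕ) : ℝ :=
  if i < 4 then (if j = i ∨ j = 7 - i then (Real.sqrt 2)⁻¹ else 0)
  else (if j = 7 - i then (Real.sqrt 2)⁻¹ else if j = i then -(Real.sqrt 2)⁻¹ else 0)

/-- The postmultiplication matrix `Q_n`: `Q_n(i,j) = A(i,j)` for `i, j < 8`,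
`Q_n(i,i) = 1` for `8 ≤ i < n`, and `Q_n(i,j) = 0` otherwise. -/
noncomputable def Qmat (n : ℕ) : Matrix (Fin n) (Fin n) ℝ :=
  Matrix.of fun i j =>
    if i.val < 8 ∧ j.val < 8 then Aent i.val j.val
    else if 8 ≤ i.val ∧ i = j then 1 else 0

def sInt (i j : ℕ) : ℤ :=
  if i < 4 then (if j = i ∨ j = 7 - i then 1 else 0)
  else if j = 7 - i then 1 else if j = i then -1 else 0

lemma key (j k : ℕ) (hj : j < 8) (hk : k < 8) :
    (∑ i ∈ Finset.range 8, sInt i j * sInt i k) = if j = k then 2 else 0 := by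
  interval_cases j <;> interval_cases k <;> decide

lemma Aent_eq (i j : ℕ) : Aent i j = (Real.sqrt 2)⁻¹ * (sInt i j : ℝ) := by
  unfold Aent sInt; split_ifs <;> simp

lemma key2 (j k : ℕ) (hj : j < 8) (hk : k < 8) :
    (∑ i ∈ Finset.range 8, Aent i j * Aent i k) = if j = k then 1 else 0 := by
  have h2 : (Real.sqrt 2)⁻¹ * (Real.sqrt 2)⁻¹ = 2⁻¹ := by
    rw [← mul_inv]
    rw [Real.mul_self_sqrt (by norm_num : (0:ℝ) ≤ 2)]
  calc (∑ i ∈ Finset.range 8, Aent i j * Aent i k)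
      = ∑ i ∈ Finset.range 8, (2⁻¹ : ℝ) * ((sInt i j * sInt i k : ℤ) : ℝ) := by
        refine Finset.sum_congr rfl fun i _ => ?_
        rw [Aent_eq, Aent_eq, ← h2]; push_cast; ring
    _ = 2⁻¹ * ((∑ i ∈ Finset.range 8, sInt i j * sInt i k : ℤ) : ℝ) := by
        rw [← Finset.mul_sum]; push_cast; ring
    _ = if j = k then 1 else 0 := by
        rw [key j k hj hk]; split_ifs <;> norm_num

lemma QtQ (n : ℕ) (hn : 8 ≤ n) : (Qmat n)ᵀ * Qmat n = 1 := by
  ext j k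
  rw [Matrix.mul_apply, Matrix.one_apply]
  simp only [transpose_apply]
  by_cases hj : j.val < 8 <;> by_cases hk : k.val < 8
  · -- both < 8
    have : ∀ i : Fin n, Qmat n i j * Qmat n i k =
        (if i.val < 8 then Aent i.val j.val * Aent i.val k.val else 0) := by
      intro i
      simp only [Qmat, of_apply]
      by_cases hi : i.val < 8
      · simp [hi, hj, hk]
      · simp only [hi, hj, hk]
        have h1 : ¬ (i.val < 8 ∧ j.val < 8) := by omega
        have h2 : ¬ (i.val < 8 ∧ k.val < 8) := by omega
        have h3 : i ≠ j := by intro h; rw [h] at hi; omega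
        have h4 : i ≠ k := by intro h; rw [h] at hi; omega
        simp [h1, h2, h3, h4]
    rw [Finset.sum_congr rfl (fun i _ => this i)]
    rw [Fin.sum_univ_eq_sum_range (fun m => if m < 8 then Aent m j.val * Aent m k.val else 0) n]
    rw [← Finset.sum_subset (Finset.range_subset_range.2 hn)
      (by intro x hx hx8; simp only [Finset.mem_range] at hx hx8; simp [show ¬ x < 8 by omega])]
    have : (∑ i ∈ Finset.range 8, if i < 8 then Aent i j.val * Aent i k.val else 0)
        = ∑ i ∈ Finset.range 8, Aent i j.val * Aent i k.val := by
      refine Finset.sum_congr rfl fun i hi => ?_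
      simp [Finset.mem_range.mp hi]
    rw [this, key2 _ _ hj hk]
    have : j = k ↔ j.val = k.val := Fin.ext_iff
    split_ifs with h1 h2 h2 <;> first | rfl | omega | (exfalso; exact h2 (this.mpr h1)) | (exfalso; exact h1 (this.mp h2))
  · -- j < 8, k ≥ 8
    have hne : j ≠ k := by intro h; rw [h] at hj; omega
    rw [if_neg hne]
    apply Finset.sum_eq_zero
    intro i _
    rcases eq_or_ne i k with rfl | hik
    · have h3 : i ≠ j := by rintro rfl; omega
      simp [Qmat, hk, h3]
    · simp [Qmat, hk, hik]
  · -- j ≥ 8, k < 8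
    have hne : j ≠ k := by intro h; rw [← h] at hk; omega
    rw [if_neg hne]
    apply Finset.sum_eq_zero
    intro i _
    rcases eq_or_ne i j with rfl | hij
    · have h3 : i ≠ k := by rintro rfl; omega
      simp [Qmat, hj, h3]
    · simp [Qmat, hj, hij]
  · -- both ≥ 8
    rw [Finset.sum_eq_single j]
    · rcases eq_or_ne j k with rfl | hjk
      · simp [Qmat, hj, show 8 ≤ j.val by omega]
      · simp [Qmat, hj, hjk]
    · intro i _ hij
      by_cases hi : i.val < 8
      · have h3 : i ≠ k := by rintro rfl; omega
        simp [Qmat, hj, h3, hi]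
      · simp [Qmat, hi, hij]
    · intro h; exact absurd (Finset.mem_univ j) h


lemma sqrt2inv_ne : ((Real.sqrt 2)⁻¹ : ℂ) ≠ 0 := by
  have h : Real.sqrt 2 ≠ 0 := by positivity
  simp [Complex.ofReal_eq_zero, inv_eq_zero, h]

lemma part2 (n : ℕ) (hn : 8 ≤ n) :
    (∀ (p : ℕ) (G : Matrix (Fin p) (Fin n) ℂ),
      (∀ r : Fin p,
        (∀ (j : ℕ) (hj : j < 4),
          Xor' (G r ⟨j, by linarith⟩ ≠ 0) (G r ⟨7 - j, (Nat.sub_le 7 j).trans_lt (by linarith)⟩ ≠ 0)) ∧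
        (∀ j : Fin n, 8 ≤ j.val → G r j ≠ 0)) →
      ∀ (r : Fin p) (c : Fin n), (G * (Qmat n).map Complex.ofReal) r c ≠ 0) := by
  intro p G hG r c
  rw [Matrix.mul_apply]
  by_cases hc : c.val < 8
  · -- two-term sum
    set a : Fin n := ⟨c.val, by omega⟩ with ha
    set b : Fin n := ⟨7 - c.val, by omega⟩ with hb
    have hab : a ≠ b := by
      simp only [ha, hb, ne_eq, Fin.mk.injEq]
      omega
    have hsum : (∑ j, G r j * ((Qmat n).map Complex.ofReal) j c)
        = G r a * ((Qmat n).map Complex.ofReal) a c + G r b * ((Qmat n).map Complex.ofReal) b c := by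
      have step : (∑ j, G r j * ((Qmat n).map Complex.ofReal) j c)
          = ∑ j ∈ ({a, b} : Finset (Fin n)), G r j * ((Qmat n).map Complex.ofReal) j c := by
        refine (Finset.sum_subset (Finset.subset_univ _) ?_).symm
        intro x _ hx
        simp only [Finset.mem_insert, Finset.mem_singleton, not_or] at hx
        have hx1 : x.val ≠ c.val := by
          intro h; exact hx.1 (Fin.ext h)
        have hx2 : x.val ≠ 7 - c.val := by
          intro h; exact hx.2 (Fin.ext h)
        have hz : ((Qmat n).map Complex.ofReal) x c = 0 := by
          simp only [Matrix.map_apply, Qmat, of_apply]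
          have hxc : x ≠ c := fun h => hx1 (by rw [h])
          by_cases hx8 : x.val < 8
          · have hA : Aent x.val c.val = 0 := by
              unfold Aent
              split_ifs with h1 h2 h3 h4 <;> first | rfl | omega
            simp [hx8, hc, hA, hxc]
          · simp [hx8, hxc]
        rw [hz, mul_zero]
      rw [step]
      exact Finset.sum_pair hab
    rw [hsum]
    have haQ : ((Qmat n).map Complex.ofReal) a c =
        (if c.val < 4 then ((Real.sqrt 2)⁻¹ : ℝ) else -(Real.sqrt 2)⁻¹ : ℝ) := by
      simp only [Matrix.map_apply, Qmat, of_apply, ha]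
      have h8 : (c.val < 8 ∧ c.val < 8) := ⟨hc, hc⟩
      rw [if_pos h8]
      unfold Aent
      split_ifs with h1 h2 h3 h4 <;> first | rfl | omega
    have hbQ : ((Qmat n).map Complex.ofReal) b c = ((Real.sqrt 2)⁻¹ : ℝ) := by
      simp only [Matrix.map_apply, Qmat, of_apply, hb]
      rw [if_pos ⟨by omega, hc⟩]
      unfold Aent
      split_ifs with h1 h2 h3 h4 <;> first | rfl | omega
    rw [haQ, hbQ]
    by_cases h4 : c.val < 4
    · rw [if_pos h4]
      have hx := (hG r).1 c.val h4
      have hae : (⟨c.val, by omega⟩ : Fin n) = a := rfl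
      have hbe : (⟨7 - c.val, by omega⟩ : Fin n) = b := rfl
      rw [hae, hbe] at hx
      rcases hx with ⟨h1, h2⟩ | ⟨h1, h2⟩
      · have hb0 : G r b = 0 := not_not.mp h2
        rw [hb0]
        simpa using mul_ne_zero h1 sqrt2inv_ne
      · have ha0 : G r a = 0 := not_not.mp h2
        rw [ha0]
        simpa using mul_ne_zero h1 sqrt2inv_ne
    · rw [if_neg h4]
      have hx := (hG r).1 (7 - c.val) (by omega)
      have hae : (⟨7 - c.val, by omega⟩ : Fin n) = b := rfl
      have hbe : (⟨7 - (7 - c.val), by omega⟩ : Fin n) = a := by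
        apply Fin.ext; simp only [ha]; omega
      rw [hae, hbe] at hx
      rcases hx with ⟨h1, h2⟩ | ⟨h1, h2⟩
      · have ha0 : G r a = 0 := not_not.mp h2
        rw [ha0]
        simpa using mul_ne_zero h1 sqrt2inv_ne
      · have hb0 : G r b = 0 := not_not.mp h2
        rw [hb0]
        simpa using mul_ne_zero h1 sqrt2inv_ne
  · -- single-term
    have hsum : (∑ j, G r j * ((Qmat n).map Complex.ofReal) j c) = G r c := by
      rw [Finset.sum_eq_single c]
      · simp [Qmat, hc, show 8 ≤ c.val by omega]
      · intro x _ hx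
        have hz : ((Qmat n).map Complex.ofReal) x c = 0 := by
          by_cases hx8 : x.val < 8
          · simp [Qmat, hc, hx, hx8]
          · simp [Qmat, hx8, hx]
        rw [hz, mul_zero]
      · intro h; exact absurd (Finset.mem_univ c) h
    rw [hsum]
    exact (hG r).2 c (by omega)


/-- (1) `Q_nᵀQ_n = I_n`, hence postmultiplication by `Q_n` preserves
`GᴴG = c·I_n`; (2) if the first eight columns of `G` have complementary zero patterns in
the column pairs `(j, 7−j)` (`j = 0,1,2,3`) and the remaining columns of `G` have no zero
entries, then `G·Q_n` has no zero entries. -/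
theorem stmt12 (n : ℕ) (hn : 8 ≤ n) :
    ((Qmat n)ᵀ * Qmat n = 1 ∧
      ∀ (p : ℕ) (G : Matrix (Fin p) (Fin n) ℂ) (c : ℂ),
        Gᴴ * G = c • (1 : Matrix (Fin n) (Fin n) ℂ) →
        (G * (Qmat n).map Complex.ofReal)ᴴ * (G * (Qmat n).map Complex.ofReal) =
          c • (1 : Matrix (Fin n) (Fin n) ℂ)) ∧
    (∀ (p : ℕ) (G : Matrix (Fin p) (Fin n) ℂ),
      (∀ r : Fin p,
        (∀ (j : ℕ) (hj : j < 4),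
          Xor' (G r ⟨j, by omega⟩ ≠ 0) (G r ⟨7 - j, by omega⟩ ≠ 0)) ∧
        (∀ j : Fin n, 8 ≤ j.val → G r j ≠ 0)) →
      ∀ (r : Fin p) (c : Fin n), (G * (Qmat n).map Complex.ofReal) r c ≠ 0) := by
  refine ⟨⟨QtQ n hn, ?_⟩, part2 n hn⟩
  intro p G c hG
  have hQ : ((Qmat n).map Complex.ofReal)ᴴ * ((Qmat n).map Complex.ofReal) = 1 := by
    have h1 : ((Qmat n).map Complex.ofReal)ᴴ = ((Qmat n)ᵀ).map Complex.ofReal := by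
      ext i j
      simp [Matrix.conjTranspose_apply, Complex.conj_ofReal]
    have h2 : ((Qmat n)ᵀ).map Complex.ofReal * (Qmat n).map Complex.ofReal
        = ((Qmat n)ᵀ * Qmat n).map Complex.ofReal := by
      ext i j
      simp only [Matrix.map_apply, Matrix.mul_apply]
      push_cast
      rfl
    rw [h1, h2, QtQ n hn, Matrix.map_one _ Complex.ofReal_zero Complex.ofReal_one]
  rw [Matrix.conjTranspose_mul]
  have h3 : ((Qmat n).map Complex.ofReal)ᴴ * Gᴴ * (G * (Qmat n).map Complex.ofReal)
      = ((Qmat n).map Complex.ofReal)ᴴ * (Gᴴ * G) * ((Qmat n).map Complex.ofReal) := by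
    simp only [Matrix.mul_assoc]
  rw [h3, hG, mul_smul_comm, mul_one, smul_mul_assoc, hQ]
end

section
/- For positive integers n, k define the Hopf–Stiefel number n∘k = min{ p ≥ 1 : for every i with 0 ≤ i ≤ p, if i < n and p − i < k then the binomial coefficient C(p,i) is even } (equivalently, the least p with (x+y)^p = 0 in F₂[x,y]/(x^n, y^k); this minimum exists). Then n∘k is commutative (n∘k = k∘n) and: (I) if k ≤ l then n∘k ≤ n∘l; (II) n∘k = 2^m if and only if n ≤ 2^m, k ≤ 2^m and n + k > 2^m; (III) if n ≤ 2^m then n∘(k + 2^m) = (n∘k) + 2^m. -/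
open Finset


/-- The Hopf–Stiefel number `n∘k`: the least `p ≥ 1` such that `C(p,i)` is even for every
`i ≤ p` with `i < n` and `p − i < k`; equivalently the least `p` with `(x+y)^p = 0` in
`F₂[x,y]/(x^n, y^k)`. -/
noncomputable def circ (n k : ℕ) : ℕ :=
  sInf {p : ℕ | 1 ≤ p ∧ ∀ i ≤ p, i < n → p - i < k → Even (Nat.choose p i)}

/-- The defining set. -/
def HS (n k : ℕ) : Set ℕ :=
  {p : ℕ | 1 ≤ p ∧ ∀ i ≤ p, i < n → p - i < k → Even (Nat.choose p i)}

lemma even_two_pow_choose {m i : ℕ} (h0 : i ≠ 0) (h1 : i ≠ 2 ^ m) :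
    Even ((2 ^ m).choose i) := by
  have := Nat.Prime.dvd_choose_pow Nat.prime_two h0 h1
  exact even_iff_two_dvd.mpr this

/-- parity shift lemma -/
lemma parity_shift {m : ℕ} (q : ℕ) {i : ℕ} (hi : i < 2 ^ m) :
    Even ((q + 2 ^ m).choose i) ↔ Even (q.choose i) := by
  rw [Nat.add_choose_eq]
  have hsplit : ∑ ij ∈ Finset.HasAntidiagonal.antidiagonal i, q.choose ij.1 * (2 ^ m).choose ij.2
      = q.choose i * (2 ^ m).choose 0
        + ∑ ij ∈ (Finset.HasAntidiagonal.antidiagonal i).erase (i, 0),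
            q.choose ij.1 * (2 ^ m).choose ij.2 :=
    (Finset.add_sum_erase _ (fun ij : ℕ × ℕ => q.choose ij.1 * (2 ^ m).choose ij.2)
      (a := (i, 0)) (by simp)).symm
  rw [hsplit]
  have heven : Even (∑ ij ∈ (Finset.HasAntidiagonal.antidiagonal i).erase (i, 0),
      q.choose ij.1 * (2 ^ m).choose ij.2) := by
    apply Finset.even_sum
    intro ij hij
    rw [Finset.mem_erase, Finset.HasAntidiagonal.mem_antidiagonal] at hij
    have h2 : ij.2 ≠ 0 := by
      intro h
      apply hij.1
      have : ij.1 = i := by omega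
      exact Prod.ext this h
    have h2' : ij.2 ≠ 2 ^ m := by omega
    exact (even_two_pow_choose h2 h2').mul_left _
  simp only [Nat.choose_zero_right, mul_one]
  rw [Nat.even_add]
  simp [heven]

lemma parity_shift' {m : ℕ} (q : ℕ) {i : ℕ} (hi : i < 2 ^ m) :
    Even ((q + 2 ^ m).choose i) ↔ Even (q.choose i) := parity_shift q hi

/-- n + k - 1 always belongs. -/
lemma mem_HS_add {n k : ℕ} (hn : 0 < n) (hk : 0 < k) : n + k - 1 ∈ HS n k := by
  refine ⟨by omega, fun i hi h1 h2 => ?_⟩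
  omega

lemma HS_nonempty {n k : ℕ} (hn : 0 < n) (hk : 0 < k) : (HS n k).Nonempty :=
  ⟨n + k - 1, mem_HS_add hn hk⟩

lemma HS_symm {n k p : ℕ} (h : p ∈ HS n k) : p ∈ HS k n := by
  refine ⟨h.1, fun i hi h1 h2 => ?_⟩
  have := h.2 (p - i) (by omega) (by omega) (by omega)
  rwa [Nat.choose_symm (by omega)] at this

lemma HS_bounds {n k p : ℕ} (hn : 0 < n) (hk : 0 < k) (h : p ∈ HS n k) :
    n ≤ p ∧ k ≤ p := by
  constructor
  · by_contra hc
    have := h.2 p le_rfl (by omega) (by simp; omega)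
    simp [Nat.choose_self] at this
  · by_contra hc
    have := h.2 0 (by omega) hn (by omega)
    simp at this

lemma two_pow_mem_HS {n k m : ℕ} (hn : 0 < n) (hk : 0 < k)
    (h1 : n ≤ 2 ^ m) (h2 : k ≤ 2 ^ m) : 2 ^ m ∈ HS n k := by
  refine ⟨Nat.one_le_two_pow, fun i hi hin hik => ?_⟩
  apply even_two_pow_choose
  · omega
  · omega

/-- Key lower bound lemma. -/
lemma witness_lemma : ∀ m n k p : ℕ, 0 < n → 0 < k → n ≤ 2 ^ m → k ≤ 2 ^ m →
    2 ^ m < n + k → p < 2 ^ m →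
    ∃ i ≤ p, i < n ∧ p - i < k ∧ ¬ Even (Nat.choose p i) := by
  intro m
  induction m with
  | zero =>
    intro n k p hn hk h1 h2 h3 hp
    interval_cases p
    exact ⟨0, le_rfl, hn, by simpa using hk, by simp⟩
  | succ m ih =>
    intro n k p hn hk h1 h2 h3 hp
    set P := 2 ^ m with hP
    have hPP : 2 ^ (m + 1) = P + P := by rw [hP]; ring
    by_cases hcase : p < P
    · -- truncate n, k to P
      have hnk' : min n P + min k P > P := by
        rcases le_or_gt n P with h | h <;> rcases le_or_gt k P with h' | h' <;> omega
      obtain ⟨i, hi, hin, hik, hodd⟩ :=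
        ih (min n P) (min k P) p (by omega) (by omega) (by omega) (by omega) hnk' hcase
      exact ⟨i, hi, by omega, by omega, hodd⟩
    · set q := p - P with hq
      have hqP : q < P := by omega
      have hpq : p = q + P := by omega
      by_cases hncase : P < n
      · -- high bit into i
        have hk' : min k P + (n - P) > P := by
          rcases le_or_gt k P with h | h <;> omega
        obtain ⟨a, ha, han, hak, hodd⟩ :=
          ih (n - P) (min k P) q (by omega) (by omega) (by omega) (by omega)
            (by omega) hqP
        refine ⟨P + a, by omega, by omega, by omega, ?_⟩
        have hsym : (q + P).choose (P + a) = (q + P).choose (q - a) := by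
          have h1 : q - a = (q + P) - (P + a) := by omega
          rw [h1, Nat.choose_symm (by omega)]
        rw [hpq, hsym, parity_shift q (by omega)]
        rwa [Nat.choose_symm (by omega)]
      · -- n ≤ P, so k > P; high bit into p - i
        have hkP : P < k := by omega
        obtain ⟨a, ha, han, hak, hodd⟩ :=
          ih n (k - P) q hn (by omega) (by omega) (by omega) (by omega) hqP
        refine ⟨a, by omega, han, by omega, ?_⟩
        rw [hpq, parity_shift q (by omega)]
        exact hodd

lemma circ_eq (n k : ℕ) : circ n k = sInf (HS n k) := rfl

lemma circ_mem {n k : ℕ} (hn : 0 < n) (hk : 0 < k) : circ n k ∈ HS n k :=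
  Nat.sInf_mem (HS_nonempty hn hk)

lemma circ_le {n k p : ℕ} (h : p ∈ HS n k) : circ n k ≤ p := Nat.sInf_le h



/-- the Hopf–Stiefel number is commutative, and:
(I) if `k ≤ l` then `n∘k ≤ n∘l`;
(II) `n∘k = 2^m` iff `n ≤ 2^m`, `k ≤ 2^m` and `n + k > 2^m`;
(III) if `n ≤ 2^m` then `n∘(k + 2^m) = (n∘k) + 2^m`. -/
theorem stmt13 :
    (∀ n k : ℕ, 0 < n → 0 < k → circ n k = circ k n) ∧
    (∀ n k l : ℕ, 0 < n → 0 < k → k ≤ l → circ n k ≤ circ n l) ∧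
    (∀ n k m : ℕ, 0 < n → 0 < k →
      (circ n k = 2 ^ m ↔ (n ≤ 2 ^ m ∧ k ≤ 2 ^ m ∧ 2 ^ m < n + k))) ∧
    (∀ n k m : ℕ, 0 < n → 0 < k → n ≤ 2 ^ m →
      circ n (k + 2 ^ m) = circ n k + 2 ^ m) := by
  refine ⟨?_, ?_, ?_, ?_⟩
  · intro n k hn hk
    apply le_antisymm
    · exact circ_le (HS_symm (circ_mem hk hn))
    · exact circ_le (HS_symm (circ_mem hn hk))
  · intro n k l hn hk hkl
    apply circ_le
    obtain ⟨h1, h2⟩ := circ_mem hn (by omega : 0 < l)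
    exact ⟨h1, fun i hi hin hik => h2 i hi hin (by omega)⟩
  · intro n k m hn hk
    constructor
    · intro h
      have hmem := circ_mem hn hk
      rw [h] at hmem
      obtain ⟨hn', hk'⟩ := HS_bounds hn hk hmem
      refine ⟨hn', hk', ?_⟩
      have := circ_le (mem_HS_add hn hk)
      omega
    · rintro ⟨h1, h2, h3⟩
      apply le_antisymm
      · exact circ_le (two_pow_mem_HS hn hk h1 h2)
      · by_contra hc
        push_neg at hc
        obtain ⟨i, hi, hin, hik, hodd⟩ :=
          witness_lemma m n k (circ n k) hn hk h1 h2 h3 hc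
        exact hodd ((circ_mem hn hk).2 i hi hin hik)
  · intro n k m hn hk hnm
    set c := circ n k with hc
    have hcmem := circ_mem hn hk
    apply le_antisymm
    · apply circ_le
      refine ⟨by omega, fun i hi hin hik => ?_⟩
      rw [parity_shift' c (by omega)]
      by_cases hic : i ≤ c
      · exact hcmem.2 i hic hin (by omega)
      · rw [Nat.choose_eq_zero_of_lt (by omega)]
        exact Even.zero
    · have hmem := circ_mem hn (by omega : 0 < k + 2 ^ m)
      set p := circ n (k + 2 ^ m) with hp
      have hbd := HS_bounds hn (by omega : 0 < k + 2 ^ m) hmem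
      set q := p - 2 ^ m with hq
      have hpq : p = q + 2 ^ m := by omega
      have hqmem : q ∈ HS n k := by
        refine ⟨by omega, fun i hi hin hik => ?_⟩
        have := hmem.2 i (by omega) hin (by omega)
        rwa [hpq, parity_shift' q (by omega)] at this
      have := circ_le hqmem
      omega
end

section
/- Let t = 2^a with a = 4c + d, 0 ≤ d ≤ 3, so ρ(t) = 8c + 2^d. Write each element of {0,…,ρ(t)−1} as 8l + m with 0 ≤ m ≤ 7 (l = c forces m < 2^d). Define γ_t(8l+m) = t(1 − 2^{−l}) + 8^l·m, and define χ_t(8l+m) = 0 if l = 0 and m = 0; χ_t(8l+m) = t·2^{−l} if l ≠ 0 and m = 0; χ_t(8l+m) = 8^l·ψ̂_{2^d}(m) if l = c and m ≠ 0; χ_t(8l+m) = t·2^{−l−1} + 8^l·ψ̂_8(m) if l ≠ c and m ≠ 0. Then for all x₁, x₂ ∈ {0,…,ρ(t)−1} with x₁ ≠ x₂, the Hamming weight |(γ_t(x₁) ⊕ γ_t(x₂)) ∧ (χ_t(x₁) ⊕ χ_t(x₂))| is odd. -/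
/-- The permutation `φ₁` of `{0,…,7}` sending `(0,1,2,3,4,5,6,7)` to `(0,1,2,3,4,7,5,6)`. -/
def phi1 : ℕ → ℕ
  | 5 => 7
  | 6 => 5
  | 7 => 6
  | x => x

/-- `ψ̂_{2^e}(m) = (2^e − φ₁(m)) mod 2^e`. -/
def psiHat (e m : ℕ) : ℕ := (2 ^ e - phi1 m) % 2 ^ e

/-- Adams–Lax–Phillips (Octonion) map `γ_t(8l+m) = t(1 − 2^{−l}) + 8^l·m` for `t = 2^a`. -/
def gammaO (a x : ℕ) : ℕ :=
  (2 ^ a - 2 ^ a / 2 ^ (x / 8)) + 8 ^ (x / 8) * (x % 8)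

/-- Adams–Lax–Phillips (Octonion) map `χ_t`:
`χ_t(8l+m) = 0` if `l = 0, m = 0`; `t·2^{−l}` if `l ≠ 0, m = 0`;
`8^l·ψ̂_{2^d}(m)` if `l = c, m ≠ 0`; `t·2^{−l−1} + 8^l·ψ̂_8(m)` if `l ≠ c, m ≠ 0`
(where `t = 2^a` and `a = 4c + d`, `0 ≤ d ≤ 3`). -/
def chiO (a x : ℕ) : ℕ :=
  let l := x / 8
  let m := x % 8
  if m = 0 then (if l = 0 then 0 else 2 ^ a / 2 ^ l)
  else if l = a / 4 then 8 ^ l * psiHat (a % 4) m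
  else 2 ^ a / 2 ^ (l + 1) + 8 ^ l * psiHat 3 m

lemma hw_zero : hw 0 = 0 := by simp [hw]

lemma hw_rec (n : ℕ) : hw n = n % 2 + hw (n / 2) := by
  rcases Nat.eq_zero_or_pos n with h | h
  · simp [h, hw_zero]
  · unfold hw
    rw [Nat.digits_def' (by norm_num : 1 < 2) h]
    simp

def pcF : ℕ → ℕ → ℕ
  | 0, _ => 0
  | f+1, n => n % 2 + pcF f (n / 2)

lemma pcF_eq : ∀ f n, n ≤ f → pcF f n = hw n := by
  intro f
  induction f with
  | zero => intro n h; interval_cases n; simp [pcF, hw_zero]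
  | succ f ih =>
    intro n h
    rw [pcF, ih (n/2) (by omega), ← hw_rec]

lemma hw_eq_pcF (n : ℕ) : hw n = pcF n n := (pcF_eq n n le_rfl).symm

lemma testBit_split {k x : ℕ} (y i : ℕ) (h : x < 2 ^ k) :
    (x + 2 ^ k * y).testBit i = if i < k then x.testBit i else y.testBit (i - k) := by
  rw [Nat.testBit_eq_decide_div_mod_eq]
  split_ifs with hik
  · have h2 : (2:ℕ) ^ k = 2 ^ i * 2 ^ (k - i) := by
      rw [← pow_add]; congr 1; omega
    have h3 : (2:ℕ) ^ (k-i) = 2 * 2 ^ (k - i - 1) := by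
      rw [← pow_succ']; congr 1; omega
    rw [h2, mul_assoc, Nat.add_mul_div_left _ _ (pow_pos (show (0:ℕ) < 2 by norm_num) i), h3]
    rw [mul_assoc, Nat.add_mul_mod_self_left, ← Nat.testBit_eq_decide_div_mod_eq]
  · have h2 : (2:ℕ) ^ i = 2 ^ k * 2 ^ (i - k) := by
      rw [← pow_add]; congr 1; omega
    rw [h2, ← Nat.div_div_eq_div_mul, Nat.add_mul_div_left _ _ (pow_pos (show (0:ℕ) < 2 by norm_num) k),
      Nat.div_eq_of_lt h, Nat.zero_add, ← Nat.testBit_eq_decide_div_mod_eq]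

lemma xor_split {k x₁ x₂ : ℕ} (y₁ y₂ : ℕ) (h₁ : x₁ < 2 ^ k) (h₂ : x₂ < 2 ^ k) :
    (x₁ + 2 ^ k * y₁) ^^^ (x₂ + 2 ^ k * y₂) = (x₁ ^^^ x₂) + 2 ^ k * (y₁ ^^^ y₂) := by
  apply Nat.eq_of_testBit_eq
  intro i
  rw [Nat.testBit_xor, testBit_split _ _ h₁, testBit_split _ _ h₂,
    testBit_split _ _ (Nat.xor_lt_two_pow h₁ h₂), Nat.testBit_xor]
  split_ifs <;> simp

lemma land_split {k x₁ x₂ : ℕ} (y₁ y₂ : ℕ) (h₁ : x₁ < 2 ^ k) (h₂ : x₂ < 2 ^ k) :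
    (x₁ + 2 ^ k * y₁) &&& (x₂ + 2 ^ k * y₂) = (x₁ &&& x₂) + 2 ^ k * (y₁ &&& y₂) := by
  apply Nat.eq_of_testBit_eq
  intro i
  rw [Nat.testBit_and, testBit_split _ _ h₁, testBit_split _ _ h₂,
    testBit_split _ _ (Nat.and_lt_two_pow _ h₂), Nat.testBit_and]
  split_ifs <;> simp

lemma hw_split {k x : ℕ} (y : ℕ) (h : x < 2 ^ k) : hw (x + 2 ^ k * y) = hw x + hw y := by
  induction k generalizing x y with
  | zero =>
    interval_cases x
    simp [hw_zero]
  | succ k ih =>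
    rcases Nat.eq_zero_or_pos (x + 2 ^ (k+1) * y) with h0 | h0
    · have hx : x = 0 := by omega
      have hy : y = 0 := by
        rcases Nat.eq_zero_or_pos y with h' | h'
        · exact h'
        · exfalso; nlinarith [pow_pos (show (0:ℕ) < 2 by norm_num) (k+1)]
      simp [hx, hy, hw_zero]
    · rw [hw_rec (x + 2 ^ (k+1) * y)]
      have e1 : (x + 2 ^ (k+1) * y) % 2 = x % 2 := by
        have h3 : (2:ℕ)^(k+1) = 2 * 2^k := by ring
        rw [h3, mul_assoc, Nat.add_mul_mod_self_left]
      have e2 : (x + 2 ^ (k+1) * y) / 2 = x / 2 + 2 ^ k * y := by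
        have h3 : (2:ℕ)^(k+1) = 2 * 2^k := by ring
        rw [h3, mul_assoc, Nat.add_mul_div_left _ _ (by norm_num : (0:ℕ) < 2)]
      rw [e1, e2, ih _ (by
        have h4 : (2:ℕ)^(k+1) = 2 * 2^k := by ring
        omega)]
      rw [hw_rec x]; omega

lemma xor_mul_pow (j x y : ℕ) : (2 ^ j * x) ^^^ (2 ^ j * y) = 2 ^ j * (x ^^^ y) := by
  have := xor_split (k := j) (x₁ := 0) (x₂ := 0) x y (pow_pos (show (0:ℕ) < 2 by norm_num) j)
    (pow_pos (show (0:ℕ) < 2 by norm_num) j)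
  simpa using this

lemma land_mul_pow (j x y : ℕ) : (2 ^ j * x) &&& (2 ^ j * y) = 2 ^ j * (x &&& y) := by
  have := land_split (k := j) (x₁ := 0) (x₂ := 0) x y (pow_pos (show (0:ℕ) < 2 by norm_num) j)
    (pow_pos (show (0:ℕ) < 2 by norm_num) j)
  simpa using this

lemma hw_mul_pow (j x : ℕ) : hw (2 ^ j * x) = hw x := by
  have := hw_split (k := j) (x := 0) x (pow_pos (show (0:ℕ) < 2 by norm_num) j)
  simpa [hw_zero] using this

lemma hw_one : hw 1 = 1 := by rw [hw_eq_pcF]; rfl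

lemma block_lt' (j : ℕ) {z e K : ℕ} (h : z < 2 ^ e) (h2 : j + e ≤ K) : 2 ^ j * z < 2 ^ K := by
  calc 2 ^ j * z < 2 ^ j * 2 ^ e := by
        have hp : 0 < (2:ℕ)^j := pow_pos (show (0:ℕ) < 2 by norm_num) j
        exact (Nat.mul_lt_mul_left hp).mpr h
    _ = 2 ^ (j + e) := (pow_add 2 j e).symm
    _ ≤ 2 ^ K := Nat.pow_le_pow_right (by norm_num) h2

lemma land_mask {n x : ℕ} (h : x < 2 ^ n) : (2 ^ n - 1) &&& x = x := by
  apply Nat.eq_of_testBit_eq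
  intro i
  rw [Nat.testBit_and, Nat.testBit_two_pow_sub_one]
  by_cases hi : i < n
  · simp [hi]
  · have hx : x.testBit i = false := Nat.testBit_lt_two_pow
      (lt_of_lt_of_le h (Nat.pow_le_pow_right (by norm_num) (by omega)))
    simp [hi, hx]

lemma psiHat_lt (e m : ℕ) : psiHat e m < 2 ^ e :=
  Nat.mod_lt _ (pow_pos (show (0:ℕ) < 2 by norm_num) e)

lemma psi_and : ∀ e < 4, ∀ m < 2^e, m ≠ 0 → hw (m &&& psiHat e m) = 1 := by
  simp only [hw_eq_pcF]; decide

lemma psi_xor : ∀ e < 4, ∀ m₁ < 2^e, ∀ m₂ < 2^e, m₁ ≠ m₂ →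
    hw ((m₁ ^^^ m₂) &&& (psiHat e m₁ ^^^ psiHat e m₂)) % 2 = 1 := by
  simp only [hw_eq_pcF]; decide

lemma two_pow_sub_one_succ (l : ℕ) : (2:ℕ)^l - 1 + 1 = 2^l :=
  Nat.succ_pred_eq_of_pos (pow_pos (show (0:ℕ) < 2 by norm_num) l)

lemma gamma_eq {a l : ℕ} (m : ℕ) (hm : m < 8) (hla : l ≤ a) :
    gammaO a (8*l+m) = 2^(3*l)*m + 2^(a-l)*(2^l - 1) := by
  unfold gammaO
  have h1 : (8*l+m)/8 = l := by omega
  have h2 : (8*l+m)%8 = m := by omega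
  rw [h1, h2, Nat.pow_div hla (by norm_num)]
  have h3 : (2:ℕ)^(a-l)*2^l = 2^a := by rw [← pow_add]; congr 1; omega
  have h4 : (2:ℕ)^(a-l)*(2^l - 1) = 2^a - 2^(a-l) := by
    rw [Nat.mul_sub, h3, mul_one]
  have h5 : (8:ℕ)^l = 2^(3*l) := by rw [pow_mul]; norm_num
  rw [h4, h5]; ring

lemma chi_eq_zero {a l : ℕ} (hla : l ≤ a) :
    chiO a (8*l) = 2^(a-l) * (if l = 0 then 0 else 1) := by
  unfold chiO
  have h1 : (8*l)/8 = l := by omega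
  have h2 : (8*l)%8 = 0 := by omega
  simp only [h1, h2, if_true]
  rcases eq_or_ne l 0 with h | h
  · simp [h]
  · simp [h, Nat.pow_div hla (by norm_num : 0 < 2)]

lemma chi_eq_top {a c d l m : ℕ} (hd : d ≤ 3) (ha : a = 4*c+d) (hm : m < 8) (hm0 : m ≠ 0)
    (hlc : l = c) : chiO a (8*l+m) = 2^(3*l) * psiHat d m := by
  unfold chiO
  have h1 : (8*l+m)/8 = l := by omega
  have h2 : (8*l+m)%8 = m := by omega
  have h3 : a / 4 = c := by omega
  have h4 : a % 4 = d := by omega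
  have h5 : (8:ℕ)^l = 2^(3*l) := by rw [pow_mul]; norm_num
  simp only [h1, h2, h3, h4, if_neg hm0, if_pos hlc, h5]

lemma chi_eq_mid {a c d l m : ℕ} (hd : d ≤ 3) (ha : a = 4*c+d) (hm : m < 8) (hm0 : m ≠ 0)
    (hlc : l ≠ c) (hla : l + 1 ≤ a) :
    chiO a (8*l+m) = 2^(a-l-1) + 2^(3*l) * psiHat 3 m := by
  unfold chiO
  have h1 : (8*l+m)/8 = l := by omega
  have h2 : (8*l+m)%8 = m := by omega
  have h3 : a / 4 = c := by omega
  have h5 : (8:ℕ)^l = 2^(3*l) := by rw [pow_mul]; norm_num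
  simp only [h1, h2, h3, if_neg hm0, if_neg hlc, h5,
    Nat.pow_div hla (by norm_num : 0 < 2)]
  congr 2

lemma assemble {k g1 g2 c1 c2 : ℕ} (G1 G2 C1 C2 : ℕ)
    (h1 : g1 < 2^k) (h2 : g2 < 2^k) (h3 : c1 < 2^k) (h4 : c2 < 2^k) :
    hw (((g1 + 2^k*G1) ^^^ (g2 + 2^k*G2)) &&& ((c1 + 2^k*C1) ^^^ (c2 + 2^k*C2)))
      = hw ((g1 ^^^ g2) &&& (c1 ^^^ c2)) + hw ((G1 ^^^ G2) &&& (C1 ^^^ C2)) := by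
  rw [xor_split _ _ h1 h2, xor_split _ _ h3 h4,
    land_split _ _ (Nat.xor_lt_two_pow h1 h2) (Nat.xor_lt_two_pow h3 h4),
    hw_split _ (Nat.and_lt_two_pow _ (Nat.xor_lt_two_pow h3 h4))]

lemma assemble' {k A u v : ℕ} (B U V : ℕ)
    (hA : A < 2^k) (hu : u < 2^k) (hv : v < 2^k) :
    hw ((A + 2^k*B) &&& ((u + 2^k*U) ^^^ (v + 2^k*V)))
      = hw (A &&& (u ^^^ v)) + hw (B &&& (U ^^^ V)) := by
  rw [xor_split _ _ hu hv, land_split _ _ hA (Nat.xor_lt_two_pow hu hv),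
    hw_split _ (Nat.and_lt_two_pow _ (Nat.xor_lt_two_pow hu hv))]


lemma keyB {a c d l m M : ℕ} (hd : d ≤ 3) (ha : a = 4*c+d)
    (hm : m < 8) (hM : M < 8) (hlc : l ≤ c)
    (hm' : l = c → m < 2^d) (hM' : l = c → M < 2^d) (hmM : m < M) :
    hw ((gammaO a (8*l+m) ^^^ gammaO a (8*l+M)) &&& (chiO a (8*l+m) ^^^ chiO a (8*l+M))) % 2
      = 1 := by
  have hla : l ≤ a := by omega
  have hM0 : M ≠ 0 := by omega
  -- bound for the low blocks at cut a-l
  have hblk : ∀ z : ℕ, (l = c → z < 2^d) → (z < 8) → 2^(3*l)*z < 2^(a-l) := by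
    intro z h1 h2
    rcases eq_or_lt_of_le hlc with h | h
    · exact block_lt' _ (h1 h) (by omega)
    · exact block_lt' _ (show z < 2^3 by omega) (by omega)
  have hg1 : 2^(3*l)*m < 2^(a-l) := hblk m hm' hm
  have hg2 : 2^(3*l)*M < 2^(a-l) := hblk M hM' hM
  -- gamma xor
  have hgx : gammaO a (8*l+m) ^^^ gammaO a (8*l+M) = 2^(3*l)*(m ^^^ M) + 2^(a-l)*0 := by
    rw [gamma_eq m hm hla, gamma_eq M hM hla, xor_split _ _ hg1 hg2, Nat.xor_self, mul_zero,
      xor_mul_pow]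
  rcases eq_or_ne m 0 with hm0 | hm0
  · -- m = 0
    subst hm0
    rcases eq_or_lt_of_le hlc with hleq | hllt
    · -- l = c
      have hchi2 : chiO a (8*l+M) = 2^(3*l)*psiHat d M + 2^(a-l)*0 := by
        rw [chi_eq_top hd ha hM hM0 hleq, mul_zero, add_zero]
      have hchi1 : chiO a (8*l+0) = 0 + 2^(a-l)*(if l = 0 then 0 else 1) := by
        rw [show 8*l+0 = 8*l by ring, chi_eq_zero hla, zero_add]
      have hpsi : 2^(3*l)*psiHat d M < 2^(a-l) :=
        block_lt' _ (psiHat_lt d M) (by omega)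
      rw [hgx, hchi1, hchi2,
        assemble' _ _ _ (by simpa using hg2) (pow_pos (show (0:ℕ) < 2 by norm_num) _) hpsi]
      rw [Nat.zero_xor, Nat.zero_xor, Nat.zero_and, hw_zero, add_zero, land_mul_pow, hw_mul_pow]
      rw [psi_and d (by omega) M (hM' hleq) hM0]
    · -- l < c
      have hchi2 : chiO a (8*l+M) = (2^(3*l)*psiHat 3 M + 2^(a-l-1)*1) + 2^(a-l)*0 := by
        rw [chi_eq_mid hd ha hM hM0 (by omega) (by omega), mul_zero, add_zero, mul_one]
        ring
      have hchi1 : chiO a (8*l+0) = 0 + 2^(a-l)*(if l = 0 then 0 else 1) := by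
        rw [show 8*l+0 = 8*l by ring, chi_eq_zero hla, zero_add]
      have hpsiS : 2^(3*l)*psiHat 3 M < 2^(a-l-1) :=
        block_lt' _ (psiHat_lt 3 M) (by omega)
      have hlow2 : 2^(3*l)*psiHat 3 M + 2^(a-l-1)*1 < 2^(a-l) := by
        have : (2:ℕ)^(a-l) = 2^(a-l-1)*2 := by rw [← pow_succ]; congr 1; omega
        omega
      rw [hgx, hchi1, hchi2,
        assemble' _ _ _ (by simpa using hg2) (pow_pos (show (0:ℕ) < 2 by norm_num) _) hlow2]
      rw [Nat.zero_xor, Nat.zero_xor, Nat.zero_and, hw_zero, add_zero]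
      have hg1' : 2^(3*l)*M < 2^(a-l-1) := block_lt' _ (show M < 2^3 by omega) (by omega)
      have : 2^(3*l)*M &&& (2^(3*l)*psiHat 3 M + 2^(a-l-1)*1) =
          2^(3*l)*(M &&& psiHat 3 M) + 2^(a-l-1)*0 := by
        rw [show 2^(3*l)*M = 2^(3*l)*M + 2^(a-l-1)*0 by ring,
          land_split _ _ hg1' hpsiS, land_mul_pow]
        norm_num
      rw [this, mul_zero, add_zero, hw_mul_pow, psi_and 3 (by omega) M (by omega) hM0]
  · -- m ≠ 0
    rcases eq_or_lt_of_le hlc with hleq | hllt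
    · -- l = c
      have hchi1 : chiO a (8*l+m) = 2^(3*l)*psiHat d m := chi_eq_top hd ha hm hm0 hleq
      have hchi2 : chiO a (8*l+M) = 2^(3*l)*psiHat d M := chi_eq_top hd ha hM hM0 hleq
      rw [hgx, mul_zero, add_zero, hchi1, hchi2, xor_mul_pow, land_mul_pow, hw_mul_pow]
      exact psi_xor d (by omega) m (hm' hleq) M (hM' hleq) (by omega)
    · -- l < c
      have hchi1 : chiO a (8*l+m) = 2^(3*l)*psiHat 3 m + 2^(a-l-1)*1 := by
        rw [chi_eq_mid hd ha hm hm0 (by omega) (by omega), mul_one]; ring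
      have hchi2 : chiO a (8*l+M) = 2^(3*l)*psiHat 3 M + 2^(a-l-1)*1 := by
        rw [chi_eq_mid hd ha hM hM0 (by omega) (by omega), mul_one]; ring
      have hp1 : 2^(3*l)*psiHat 3 m < 2^(a-l-1) := block_lt' _ (psiHat_lt 3 m) (by omega)
      have hp2 : 2^(3*l)*psiHat 3 M < 2^(a-l-1) := block_lt' _ (psiHat_lt 3 M) (by omega)
      have hcx : chiO a (8*l+m) ^^^ chiO a (8*l+M) =
          2^(3*l)*(psiHat 3 m ^^^ psiHat 3 M) := by
        rw [hchi1, hchi2, xor_split _ _ hp1 hp2, Nat.xor_self, mul_zero, add_zero, xor_mul_pow]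
      rw [hgx, mul_zero, add_zero, hcx, land_mul_pow, hw_mul_pow]
      exact psi_xor 3 (by omega) m (by omega) M (by omega) (by omega)

lemma keyA {a c d l m L M : ℕ} (hd : d ≤ 3) (ha : a = 4*c+d)
    (hm : m < 8) (hM : M < 8) (hLc : L ≤ c) (hM' : L = c → M < 2^d) (hlL : l < L) :
    hw ((gammaO a (8*l+m) ^^^ gammaO a (8*L+M)) &&& (chiO a (8*l+m) ^^^ chiO a (8*L+M))) % 2
      = 1 := by
  have hla : l ≤ a := by omega
  have hLa : L ≤ a := by omega
  have hposn : (0:ℕ) < 2^(L-l) := pow_pos (show (0:ℕ) < 2 by norm_num) _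
  have hone : (1:ℕ) < 2^(L-l) := by
    calc (1:ℕ) < 2^1 := by norm_num
      _ ≤ 2^(L-l) := Nat.pow_le_pow_right (by norm_num) (by omega)
  have hmaskn : (2:ℕ)^(L-l) - 1 < 2^(L-l) := Nat.sub_lt hposn one_pos
  -- gamma normal forms at cut a-L
  have hpw : (2:ℕ)^(a-L)*2^(L-l) = 2^(a-l) := by rw [← pow_add]; congr 1; omega
  have hga : gammaO a (8*l+m) = 2^(3*l)*m + 2^(a-L)*(2^(L-l)*(2^l-1)) := by
    rw [gamma_eq m hm hla, ← mul_assoc, hpw]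
  have hgb : gammaO a (8*L+M) = 2^(3*L)*M + 2^(a-L)*(2^L-1) := gamma_eq M hM hLa
  -- bounds at cut a-L
  have hg1k : 2^(3*l)*m < 2^(a-L) := block_lt' _ (show m < 2^3 by omega) (by omega)
  have hg2k : 2^(3*L)*M < 2^(a-L) := by
    rcases eq_or_lt_of_le hLc with h | h
    · exact block_lt' _ (hM' h) (by omega)
    · exact block_lt' _ (show M < 2^3 by omega) (by omega)
  -- high gamma xor is the mask 2^(L-l)-1
  have hXh : (2^(L-l)*(2^l-1)) ^^^ (2^L-1) = 2^(L-l)-1 := by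
    have e1 : (2:ℕ)^(L-l)*2^l = 2^L := by rw [← pow_add]; congr 1; omega
    have e3 : (2:ℕ)^(L-l)*(2^l-1) + 2^(L-l) = 2^L := by
      calc (2:ℕ)^(L-l)*(2^l-1) + 2^(L-l) = 2^(L-l)*((2^l-1)+1) := by ring
        _ = 2^(L-l)*2^l := by rw [two_pow_sub_one_succ]
        _ = 2^L := e1
    have h1 : 1 ≤ (2:ℕ)^(L-l) := Nat.one_le_two_pow
    have e2 : (2:ℕ)^L - 1 = (2^(L-l)-1) + 2^(L-l)*(2^l-1) := by omega
    have := xor_split (k := L-l) (x₁ := 0) (x₂ := 2^(L-l)-1) (2^l-1) (2^l-1) hposn hmaskn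
    rw [show (2:ℕ)^(L-l)*(2^l-1) = 0 + 2^(L-l)*(2^l-1) by ring, e2, this]
    simp
  -- low gamma xor
  have hXl : (2^(3*l)*m) ^^^ (2^(3*L)*M) = 2^(3*l)*m + 2^(3*L)*M := by
    have h1 : 2^(3*l)*m < 2^(3*L) := block_lt' _ (show m < 2^3 by omega) (by omega)
    have := xor_split (k := 3*L) (x₁ := 2^(3*l)*m) (x₂ := 0) 0 M h1
      (pow_pos (show (0:ℕ) < 2 by norm_num) _)
    simpa using this
  -- high-part AND when m = 0 : mask &&& (2^(L-l)*e ^^^ V') = V'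
  have hhigh0 : ∀ V' : ℕ, V' < 2^(L-l) →
      ((2^(L-l)*(2^l-1)) ^^^ (2^L-1)) &&& ((2^(L-l)*(if l = 0 then 0 else 1)) ^^^ V') = V' := by
    intro V' hV'
    have e1 : (2^(L-l)*(if l = 0 then 0 else 1)) ^^^ V'
        = V' + 2^(L-l)*(if l = 0 then 0 else 1) := by
      have := xor_split (k := L-l) (x₁ := 0) (x₂ := V') (if l = 0 then 0 else 1) 0 hposn hV'
      simpa using this
    have e2 : ((2^(L-l)-1) + 2^(L-l)*0) &&& (V' + 2^(L-l)*(if l = 0 then 0 else 1))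
        = ((2^(L-l)-1) &&& V') + 2^(L-l)*(0 &&& (if l = 0 then 0 else 1)) :=
      land_split _ _ hmaskn hV'
    rw [hXh, e1]
    rw [show (2:ℕ)^(L-l)-1 = (2^(L-l)-1) + 2^(L-l)*0 by ring, e2, land_mask hV',
      Nat.zero_and, mul_zero, add_zero]
  -- chi₁ normal form when m ≠ 0
  have hc1ne : m ≠ 0 → chiO a (8*l+m) = 2^(3*l)*psiHat 3 m + 2^(a-L)*2^(L-l-1) := by
    intro hm0
    have hp : (2:ℕ)^(a-L)*2^(L-l-1) = 2^(a-l-1) := by rw [← pow_add]; congr 1; omega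
    rw [chi_eq_mid hd ha hm hm0 (by omega) (by omega), hp]; ring
  have hu1 : 2^(3*l)*psiHat 3 m < 2^(a-L) := block_lt' _ (psiHat_lt 3 m) (by omega)
  rcases eq_or_ne M 0 with hM0 | hM0
  · -- M = 0 ; χ₂ = 2^(a-L)·1
    subst hM0
    have hc2 : chiO a (8*L+0) = 0 + 2^(a-L)*1 := by
      rw [Nat.add_zero, chi_eq_zero hLa, if_neg (by omega : ¬ L = 0)]
      ring
    rcases eq_or_ne m 0 with hm0 | hm0
    · -- m = 0, M = 0
      subst hm0
      have hc1 : chiO a (8*l+0) = 0 + 2^(a-L)*(2^(L-l)*(if l = 0 then 0 else 1)) := by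
        rw [Nat.add_zero, chi_eq_zero hla, ← mul_assoc, hpw]; ring
      rw [hga, hgb, hc1, hc2, assemble _ _ _ _ hg1k hg2k
        (pow_pos (show (0:ℕ) < 2 by norm_num) _) (pow_pos (show (0:ℕ) < 2 by norm_num) _)]
      rw [hhigh0 1 hone]
      simp [hw_zero, hw_one]
    · -- m ≠ 0, M = 0
      rw [hga, hgb, hc1ne hm0, hc2, assemble _ _ _ _ hg1k hg2k hu1
        (pow_pos (show (0:ℕ) < 2 by norm_num) _)]
      have hlow : (2^(3*l)*m ^^^ 2^(3*L)*0) &&& (2^(3*l)*psiHat 3 m ^^^ 0)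
          = 2^(3*l)*(m &&& psiHat 3 m) := by
        rw [mul_zero, Nat.xor_zero, Nat.xor_zero, land_mul_pow]
      rw [hlow, hw_mul_pow, psi_and 3 (by omega) m (by omega) hm0, hXh]
      rcases eq_or_ne (L-l) 1 with hn1 | hn1
      · -- adjacent: the two high bits cancel
        have : (2:ℕ)^(L-l-1) ^^^ 1 = 0 := by
          rw [show L-l-1 = 0 by omega, pow_zero, Nat.xor_self]
        rw [this, Nat.and_zero, hw_zero]
      · -- L-l ≥ 2
        have hn2 : 2 ≤ L - l := by omega
        have hx1 : (2:ℕ)^(L-l-1) ^^^ 1 = 1 + 2^(L-l-1)*1 := by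
          have := xor_split (k := L-l-1) (x₁ := 0) (x₂ := 1) 1 0
            (pow_pos (show (0:ℕ) < 2 by norm_num) _)
            (by calc (1:ℕ) < 2^1 := by norm_num
                _ ≤ 2^(L-l-1) := Nat.pow_le_pow_right (by norm_num) (by omega))
          simpa using this
        have hlt : 1 + 2^(L-l-1)*1 < 2^(L-l) := by
          have h1 : (2:ℕ)^(L-l) = 2^(L-l-1)*2 := by rw [← pow_succ]; congr 1; omega
          have h2 : (2:ℕ)^1 ≤ 2^(L-l-1) := Nat.pow_le_pow_right (by norm_num) (by omega)
          have h3 : (2:ℕ)^1 = 2 := by norm_num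
          omega
        rw [hx1, land_mask hlt, hw_split _ (by
          calc (1:ℕ) < 2^1 := by norm_num
            _ ≤ 2^(L-l-1) := Nat.pow_le_pow_right (by norm_num) (by omega)), hw_one]
  · -- M ≠ 0
    -- χ₂ low part and its structure
    rcases eq_or_lt_of_le hLc with hLc' | hLc'
    · -- L = c : χ₂ = 2^(3L)·ψ_d(M)
      have hc2 : chiO a (8*L+M) = 2^(3*L)*psiHat d M + 2^(a-L)*0 := by
        rw [chi_eq_top hd ha hM hM0 hLc', mul_zero, add_zero]
      have hv : 2^(3*L)*psiHat d M < 2^(a-L) := block_lt' _ (psiHat_lt d M) (by omega)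
      rcases eq_or_ne m 0 with hm0 | hm0
      · -- m = 0
        subst hm0
        have hc1 : chiO a (8*l+0) = 0 + 2^(a-L)*(2^(L-l)*(if l = 0 then 0 else 1)) := by
          rw [Nat.add_zero, chi_eq_zero hla, ← mul_assoc, hpw]; ring
        rw [hga, hgb, hc1, hc2, assemble _ _ _ _ hg1k hg2k
          (pow_pos (show (0:ℕ) < 2 by norm_num) _) hv]
        rw [hhigh0 0 hposn]
        have hlow : (2^(3*l)*0 ^^^ 2^(3*L)*M) &&& (0 ^^^ 2^(3*L)*psiHat d M)
            = 2^(3*L)*(M &&& psiHat d M) := by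
          rw [mul_zero, Nat.zero_xor, Nat.zero_xor, land_mul_pow]
        rw [hlow, hw_mul_pow, psi_and d (by omega) M (hM' hLc') hM0, hw_zero]
      · -- m ≠ 0
        rw [hga, hgb, hc1ne hm0, hc2, assemble _ _ _ _ hg1k hg2k hu1 hv]
        have hlow : (2^(3*l)*m ^^^ 2^(3*L)*M) &&& (2^(3*l)*psiHat 3 m ^^^ 2^(3*L)*psiHat d M)
            = 2^(3*l)*(m &&& psiHat 3 m) + 2^(3*L)*(M &&& psiHat d M) := by
          have hYl : (2^(3*l)*psiHat 3 m) ^^^ (2^(3*L)*psiHat d M)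
              = 2^(3*l)*psiHat 3 m + 2^(3*L)*psiHat d M := by
            have h1 : 2^(3*l)*psiHat 3 m < 2^(3*L) := block_lt' _ (psiHat_lt 3 m) (by omega)
            have := xor_split (k := 3*L) (x₁ := 2^(3*l)*psiHat 3 m) (x₂ := 0) 0 (psiHat d M) h1
              (pow_pos (show (0:ℕ) < 2 by norm_num) _)
            simpa using this
          rw [hXl, hYl, land_split _ _ (block_lt' _ (show m < 2^3 by omega) (by omega))
            (block_lt' _ (psiHat_lt 3 m) (by omega)), land_mul_pow]
        rw [hlow, hw_split _ (block_lt' _ (Nat.and_lt_two_pow m (psiHat_lt 3 m)) (by omega)),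
          hw_mul_pow, psi_and 3 (by omega) m (by omega) hm0,
          psi_and d (by omega) M (hM' hLc') hM0, hXh, Nat.xor_zero,
          land_mask (show (2:ℕ)^(L-l-1) < 2^(L-l) from Nat.pow_lt_pow_right (by norm_num) (by omega))]
        rw [show (2:ℕ)^(L-l-1) = 2^(L-l-1)*1 by ring, hw_mul_pow, hw_one]
    · -- L < c : χ₂ = 2^(3L)·ψ₃(M) + 2^(a-L-1)
      have hsplit2 : (2:ℕ)^(a-L-1) = 2^(3*L)*2^(a-4*L-1) := by rw [← pow_add]; congr 1; omega
      have hc2' : chiO a (8*L+M) = 2^(3*L)*(psiHat 3 M + 2^(a-4*L-1)) := by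
        rw [chi_eq_mid hd ha hM hM0 (by omega) (by omega), hsplit2]; ring
      have hc2 : chiO a (8*L+M) = 2^(3*L)*(psiHat 3 M + 2^(a-4*L-1)) + 2^(a-L)*0 := by
        rw [hc2']; ring
      have hv : 2^(3*L)*(psiHat 3 M + 2^(a-4*L-1)) < 2^(a-L) := by
        apply block_lt' _ (show psiHat 3 M + 2^(a-4*L-1) < 2^(a-4*L) by
          have h1 : (2:ℕ)^(a-4*L) = 2^(a-4*L-1)*2 := by rw [← pow_succ]; congr 1; omega
          have h2 : psiHat 3 M < 2^3 := psiHat_lt 3 M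
          have h3 : (2:ℕ)^3 ≤ 2^(a-4*L-1) := Nat.pow_le_pow_right (by norm_num) (by omega)
          omega) (by omega)
      -- inner AND : M &&& (ψ₃M + 2^(a-4L-1)) = M &&& ψ₃M
      have hinner : M &&& (psiHat 3 M + 2^(a-4*L-1)) = M &&& psiHat 3 M := by
        have h1 : (2:ℕ)^(a-4*L-1) = 2^3*2^(a-4*L-4) := by rw [← pow_add]; congr 1; omega
        have := land_split (k := 3) (x₁ := M) (x₂ := psiHat 3 M) 0 (2^(a-4*L-4))
          (show M < 2^3 by omega) (psiHat_lt 3 M)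
        rw [h1]
        simpa using this
      rcases eq_or_ne m 0 with hm0 | hm0
      · -- m = 0
        subst hm0
        have hc1 : chiO a (8*l+0) = 0 + 2^(a-L)*(2^(L-l)*(if l = 0 then 0 else 1)) := by
          rw [Nat.add_zero, chi_eq_zero hla, ← mul_assoc, hpw]; ring
        rw [hga, hgb, hc1, hc2, assemble _ _ _ _ hg1k hg2k
          (pow_pos (show (0:ℕ) < 2 by norm_num) _) hv]
        rw [hhigh0 0 hposn]
        have hlow : (2^(3*l)*0 ^^^ 2^(3*L)*M) &&& (0 ^^^ 2^(3*L)*(psiHat 3 M + 2^(a-4*L-1)))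
            = 2^(3*L)*(M &&& psiHat 3 M) := by
          rw [mul_zero, Nat.zero_xor, Nat.zero_xor, land_mul_pow, hinner]
        rw [hlow, hw_mul_pow, psi_and 3 (by omega) M (by omega) hM0, hw_zero]
      · -- m ≠ 0
        rw [hga, hgb, hc1ne hm0, hc2, assemble _ _ _ _ hg1k hg2k hu1 hv]
        have hlow : (2^(3*l)*m ^^^ 2^(3*L)*M) &&&
            (2^(3*l)*psiHat 3 m ^^^ 2^(3*L)*(psiHat 3 M + 2^(a-4*L-1)))
            = 2^(3*l)*(m &&& psiHat 3 m) + 2^(3*L)*(M &&& psiHat 3 M) := by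
          have hYl : (2^(3*l)*psiHat 3 m) ^^^ (2^(3*L)*(psiHat 3 M + 2^(a-4*L-1)))
              = 2^(3*l)*psiHat 3 m + 2^(3*L)*(psiHat 3 M + 2^(a-4*L-1)) := by
            have h1 : 2^(3*l)*psiHat 3 m < 2^(3*L) := block_lt' _ (psiHat_lt 3 m) (by omega)
            have := xor_split (k := 3*L) (x₁ := 2^(3*l)*psiHat 3 m) (x₂ := 0) 0
              (psiHat 3 M + 2^(a-4*L-1)) h1 (pow_pos (show (0:ℕ) < 2 by norm_num) _)
            simpa using this
          rw [hXl, hYl, land_split _ _ (block_lt' _ (show m < 2^3 by omega) (by omega))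
            (block_lt' _ (psiHat_lt 3 m) (by omega)), land_mul_pow, hinner]
        rw [hlow, hw_split _ (block_lt' _ (Nat.and_lt_two_pow m (psiHat_lt 3 m)) (by omega)),
          hw_mul_pow, psi_and 3 (by omega) m (by omega) hm0,
          psi_and 3 (by omega) M (by omega) hM0, hXh, Nat.xor_zero,
          land_mask (show (2:ℕ)^(L-l-1) < 2^(L-l) from Nat.pow_lt_pow_right (by norm_num) (by omega))]
        rw [show (2:ℕ)^(L-l-1) = 2^(L-l-1)*1 by ring, hw_mul_pow, hw_one]

/-- the Adams–Lax–Phillips Octonion maps `(γ_t, χ_t)` satisfy the odd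
Hamming-weight condition: for distinct `x₁, x₂ < ρ(t) = 8c + 2^d`,
`|(γ_t(x₁) ⊕ γ_t(x₂)) ∧ (χ_t(x₁) ⊕ χ_t(x₂))|` is odd. -/
theorem stmt14 (a c d : ℕ) (hd : d ≤ 3) (ha : a = 4 * c + d)
    (x₁ x₂ : ℕ) (h₁ : x₁ < 8 * c + 2 ^ d) (h₂ : x₂ < 8 * c + 2 ^ d) (hne : x₁ ≠ x₂) :
    Odd (hw ((gammaO a x₁ ^^^ gammaO a x₂) &&& (chiO a x₁ ^^^ chiO a x₂))) := by
  rw [Nat.odd_iff]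
  have hp : (2:ℕ)^d ≤ 8 := by
    calc (2:ℕ)^d ≤ 2^3 := Nat.pow_le_pow_right (by norm_num) hd
      _ = 8 := by norm_num
  obtain ⟨l, m, hm, hx1⟩ : ∃ l m, m < 8 ∧ x₁ = 8*l+m := ⟨x₁/8, x₁%8, by omega, by omega⟩
  obtain ⟨L, M, hM, hx2⟩ : ∃ L M, M < 8 ∧ x₂ = 8*L+M := ⟨x₂/8, x₂%8, by omega, by omega⟩
  subst hx1
  subst hx2
  have hlc : l ≤ c := by omega
  have hlc' : l = c → m < 2^d := by omega
  have hLc : L ≤ c := by omega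
  have hLc' : L = c → M < 2^d := by omega
  rcases Nat.lt_trichotomy l L with h | h | h
  · exact keyA hd ha hm hM hLc hLc' h
  · subst h
    rcases Nat.lt_trichotomy m M with h' | h' | h'
    · exact keyB hd ha hm hM hlc hlc' hLc' h'
    · exact absurd (by omega) hne
    · rw [Nat.xor_comm (gammaO a (8*l+m)), Nat.xor_comm (chiO a (8*l+m))]
      exact keyB hd ha hM hm hlc hLc' hlc' h'
  · rw [Nat.xor_comm (gammaO a (8*l+m)), Nat.xor_comm (chiO a (8*l+m))]
    exact keyA hd ha hM hm hlc hlc' h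
end
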